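/- arXiv:1106.4531 — 9 statements merged into one kernel-verified Lean document; each statement's English description precedes it below -/
import Mathlib

section
/- If J : ℝ → ℝ is nonnegative, continuous, integrable with ∫J = 1 and finite first moment, and u : ℝ → ℝ is bounded and measurable, then for all x, y ∈ ℝ: ∫_{y}^{x} ∫_{ℝ} J(s-t)(u(t)-u(s)) dt ds = ∫_{0}^{1} ∫_{ℝ} J(-z) z (u(x+zη) - u(y+zη)) dz dη. -/
open MeasureTheory Real Filter

lemma swap_le (f : ℝ → ℝ → ℝ) (a b : ℝ) (hab : a ≤ b)
    (hf : Integrable (Function.uncurry f)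
      ((volume.restrict (Set.Ioc a b)).prod volume)) :
    ∫ s in a..b, ∫ z, f s z = ∫ z, ∫ s in a..b, f s z := by
  simp only [intervalIntegral.integral_of_le hab]
  exact integral_integral_swap hf

lemma swap_gen (f : ℝ → ℝ → ℝ) (a b : ℝ)
    (hf : Integrable (Function.uncurry f)
      ((volume.restrict (Set.uIoc a b)).prod volume)) :
    ∫ s in a..b, ∫ z, f s z = ∫ z, ∫ s in a..b, f s z := by
  rcases le_total a b with hab | hab
  · exact swap_le f a b hab (by rwa [Set.uIoc_of_le hab] at hf)
  · have h := swap_le f b a hab (by rwa [Set.uIoc_comm, Set.uIoc_of_le hab] at hf)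
    calc ∫ s in a..b, ∫ z, f s z = -∫ s in b..a, ∫ z, f s z :=
          intervalIntegral.integral_symm b a
      _ = -∫ z, ∫ s in b..a, f s z := by rw [h]
      _ = ∫ z, -∫ s in b..a, f s z := (integral_neg _).symm
      _ = ∫ z, ∫ s in a..b, f s z :=
          integral_congr_ae (Filter.Eventually.of_forall fun z =>
            (intervalIntegral.integral_symm b a).symm)

lemma bound_int (g : ℝ → ℝ) (hg : Integrable g) (a b : ℝ) :
    Integrable (fun p : ℝ × ℝ => g p.2)
      ((volume.restrict (Set.uIoc a b)).prod volume) := by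
  have h1 : Integrable (fun _ : ℝ => (1 : ℝ)) (volume.restrict (Set.uIoc a b)) := by
    refine integrableOn_const ?_
    rw [Set.uIoc]
    exact measure_Ioc_lt_top.ne
  simpa using h1.mul_prod hg

lemma integ_main (f : ℝ → ℝ → ℝ) (g : ℝ → ℝ) (a b : ℝ)
    (hmeas : Measurable (Function.uncurry f)) (hg : Integrable g)
    (hbd : ∀ s z, |f s z| ≤ g z) :
    Integrable (Function.uncurry f)
      ((volume.restrict (Set.uIoc a b)).prod volume) := by
  refine (bound_int g hg a b).mono' hmeas.aestronglyMeasurable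
    (Filter.Eventually.of_forall fun p => ?_)
  simpa [Real.norm_eq_abs, Function.uncurry] using hbd p.1 p.2

theorem stmt0 (J u : ℝ → ℝ)
    (hJc : Continuous J) (hJ0 : ∀ z, 0 ≤ J z)
    (hJint : Integrable J) (hJ1 : ∫ z, J z = 1)
    (hJmom : Integrable (fun z => |z| * J z))
    (hum : Measurable u) (hub : ∃ C, ∀ x, |u x| ≤ C) (x y : ℝ) :
    (∫ s in y..x, ∫ t, J (s - t) * (u t - u s)) =
      ∫ η in (0:ℝ)..1, ∫ z, J (-z) * z * (u (x + z * η) - u (y + z * η)) := by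
  obtain ⟨C, hC⟩ := hub
  have hC0 : 0 ≤ C := le_trans (abs_nonneg _) (hC 0)
  have hJneg : Integrable (fun z => J (-z)) := hJint.comp_neg
  have hJmomneg : Integrable (fun z => |z| * J (-z)) := by
    simpa using hJmom.comp_neg
  -- interval integrability of bounded measurable functions
  have hui : ∀ (v : ℝ → ℝ), Measurable v → (∀ t, |v t| ≤ C) →
      ∀ a b : ℝ, IntervalIntegrable v volume a b := by
    intro v hv hvb a b
    rw [intervalIntegrable_iff]
    refine Integrable.mono' (g := fun _ => C) ?_ hv.aestronglyMeasurable
      (Filter.Eventually.of_forall fun t => by simpa [Real.norm_eq_abs] using hvb t)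
    refine integrableOn_const ?_
    rw [Set.uIoc]
    exact measure_Ioc_lt_top.ne
  -- Step 1: rewrite inner integral of LHS via translation
  have hinner : ∀ s : ℝ, (∫ t, J (s - t) * (u t - u s))
      = ∫ z, J (-z) * (u (s + z) - u s) := by
    intro s
    rw [← integral_add_left_eq_self (μ := volume) s
      (f := fun t => J (s - t) * (u t - u s))]
    refine integral_congr_ae (Filter.Eventually.of_forall fun z => ?_)
    show J (s - (s + z)) * (u (s + z) - u s) = J (-z) * (u (s + z) - u s)
    rw [show s - (s + z) = -z from by ring]
  have hLHS1 : (∫ s in y..x, ∫ t, J (s - t) * (u t - u s))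
      = ∫ s in y..x, ∫ z, J (-z) * (u (s + z) - u s) :=
    intervalIntegral.integral_congr fun s _ => hinner s
  -- Step 2: Fubini on LHS
  have hmeas1 : Measurable (Function.uncurry fun s z => J (-z) * (u (s + z) - u s)) :=
    ((hJc.measurable.comp measurable_snd.neg).mul
      ((hum.comp (measurable_fst.add measurable_snd)).sub (hum.comp measurable_fst)))
  have hbd1 : ∀ s z : ℝ, |J (-z) * (u (s + z) - u s)| ≤ J (-z) * (2 * C) := by
    intro s z
    rw [abs_mul, abs_of_nonneg (hJ0 _)]
    refine mul_le_mul_of_nonneg_left ?_ (hJ0 _)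
    calc |u (s + z) - u s| ≤ |u (s + z)| + |u s| := abs_sub _ _
      _ ≤ C + C := add_le_add (hC _) (hC _)
      _ = 2 * C := by ring
  have hswap1 : (∫ s in y..x, ∫ z, J (-z) * (u (s + z) - u s))
      = ∫ z, ∫ s in y..x, J (-z) * (u (s + z) - u s) :=
    swap_gen _ y x (integ_main _ (fun z => J (-z) * (2 * C)) y x hmeas1
      (hJneg.mul_const _) hbd1)
  -- Step 3: Fubini on RHS
  have hmeas2 : Measurable (Function.uncurry fun η z =>
      J (-z) * z * (u (x + z * η) - u (y + z * η))) :=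
    ((hJc.measurable.comp measurable_snd.neg).mul measurable_snd).mul
      ((hum.comp (measurable_const.add (measurable_snd.mul measurable_fst))).sub
        (hum.comp (measurable_const.add (measurable_snd.mul measurable_fst))))
  have hbd2 : ∀ η z : ℝ, |J (-z) * z * (u (x + z * η) - u (y + z * η))|
      ≤ |z| * J (-z) * (2 * C) := by
    intro η z
    rw [abs_mul, abs_mul, abs_of_nonneg (hJ0 _)]
    rw [show J (-z) * |z| = |z| * J (-z) by ring]
    refine mul_le_mul_of_nonneg_left ?_ (mul_nonneg (abs_nonneg _) (hJ0 _))
    calc |u (x + z * η) - u (y + z * η)| ≤ |u (x + z * η)| + |u (y + z * η)| := abs_sub _ _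
      _ ≤ C + C := add_le_add (hC _) (hC _)
      _ = 2 * C := by ring
  have hswap2 : (∫ η in (0:ℝ)..1, ∫ z, J (-z) * z * (u (x + z * η) - u (y + z * η)))
      = ∫ z, ∫ η in (0:ℝ)..1, J (-z) * z * (u (x + z * η) - u (y + z * η)) :=
    swap_gen _ 0 1 (integ_main _ (fun z => |z| * J (-z) * (2 * C)) 0 1 hmeas2
      (hJmomneg.mul_const _) hbd2)
  rw [hLHS1, hswap1, hswap2]
  -- Step 4: pointwise equality in z
  refine integral_congr_ae (Filter.Eventually.of_forall fun z => ?_)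
  show (∫ s in y..x, J (-z) * (u (s + z) - u s))
      = ∫ η in (0:ℝ)..1, J (-z) * z * (u (x + z * η) - u (y + z * η))
  rw [intervalIntegral.integral_const_mul, intervalIntegral.integral_const_mul]
  have key : (∫ s in y..x, (u (s + z) - u s))
      = z * ∫ η in (0:ℝ)..1, (u (x + z * η) - u (y + z * η)) := by
    by_cases hz : z = 0
    · simp [hz]
    · have hux : ∀ a : ℝ, Measurable (fun s : ℝ => u (s + a)) :=
        fun a => hum.comp (measurable_id.add measurable_const)
      have h1 : (∫ s in y..x, (u (s + z) - u s))
          = (∫ s in y..x, u (s + z)) - ∫ s in y..x, u s :=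
        intervalIntegral.integral_sub
          (hui _ (hux z) (fun t => hC _) y x) (hui u hum hC y x)
      have h2 : (∫ s in y..x, u (s + z)) = ∫ s in (y + z)..(x + z), u s :=
        intervalIntegral.integral_comp_add_right u z
      have h3 : (∫ η in (0:ℝ)..1, (u (x + z * η) - u (y + z * η)))
          = (∫ η in (0:ℝ)..1, u (x + z * η)) - ∫ η in (0:ℝ)..1, u (y + z * η) := by
        refine intervalIntegral.integral_sub ?_ ?_
        · exact hui _ (hum.comp (measurable_const.add (measurable_const.mul measurable_id)))
            (fun t => hC _) 0 1
        · exact hui _ (hum.comp (measurable_const.add (measurable_const.mul measurable_id)))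
            (fun t => hC _) 0 1
      have h4 : ∀ a : ℝ, (∫ η in (0:ℝ)..1, u (a + z * η))
          = z⁻¹ * ∫ s in a..(a + z), u s := by
        intro a
        have e1 : (∫ η in (0:ℝ)..1, u (a + z * η)) = ∫ η in (0:ℝ)..1, u (z * η + a) :=
          intervalIntegral.integral_congr fun η _ => by rw [add_comm]
        rw [e1, intervalIntegral.integral_comp_mul_add u hz a]
        norm_num [smul_eq_mul, add_comm]
      -- adjacent intervals
      have hadj1 : (∫ s in (y + z)..y, u s) + ∫ s in y..x, u s = ∫ s in (y + z)..x, u s :=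
        intervalIntegral.integral_add_adjacent_intervals (hui u hum hC _ _) (hui u hum hC _ _)
      have hadj2 : (∫ s in (y + z)..x, u s) + ∫ s in x..(x + z), u s
          = ∫ s in (y + z)..(x + z), u s :=
        intervalIntegral.integral_add_adjacent_intervals (hui u hum hC _ _) (hui u hum hC _ _)
      have hsymm : (∫ s in (y + z)..y, u s) = -∫ s in y..(y + z), u s :=
        intervalIntegral.integral_symm _ _
      rw [h1, h2, h3, h4 x, h4 y]
      have hzz : z * z⁻¹ = 1 := mul_inv_cancel₀ hz
      field_simp
      linarith
  rw [key]; ring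
end

section
/- Under the hypotheses of the previous statement (bounded nonnegative solution u of J⋆u - u - cu' + f(u) = 0 with u(-∞)=0 and f'(0)>0), the function u is integrable on (-∞, 0], i.e. ∫_{-∞}^0 u(s) ds < ∞. -/
open MeasureTheory Real Filter

private lemma fbound_aux (f : ℝ → ℝ) (hf : ContDiff ℝ 1 f) (hf0 : f 0 = 0)
    (hf0' : 0 < deriv f 0) :
    ∃ δ > 0, ∀ s, 0 ≤ s → s ≤ δ → (deriv f 0 / 2) * s ≤ f s := by
  set α := deriv f 0 / 2 with hα
  have hαpos : 0 < α := by positivity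
  have hcont : Continuous (deriv f) := hf.continuous_deriv le_rfl
  have hev : ∀ᶠ t in nhds (0:ℝ), α < deriv f t :=
    hcont.continuousAt.eventually (eventually_gt_nhds (by rw [hα]; linarith))
  rw [Metric.eventually_nhds_iff] at hev
  obtain ⟨ε, hεpos, hball⟩ := hev
  refine ⟨ε/2, by positivity, fun s hs0 hsδ => ?_⟩
  rcases eq_or_lt_of_le hs0 with h | h
  · simp [← h, hf0]
  · set g : ℝ → ℝ := fun t => f t - α * t with hg
    have hgmono : StrictMonoOn g (Set.Icc 0 (ε/2)) := by
      apply strictMonoOn_of_deriv_pos (convex_Icc _ _)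
      · exact ((hf.continuous).sub (continuous_const.mul continuous_id)).continuousOn
      · intro t ht
        rw [interior_Icc] at ht
        have hd : HasDerivAt g (deriv f t - α) t := by
          have h1 : HasDerivAt f (deriv f t) t := (hf.differentiable one_ne_zero t).hasDerivAt
          have h2 : HasDerivAt (fun x : ℝ => α * x) α t := by
            simpa using (hasDerivAt_id t).const_mul α
          exact h1.sub h2
        rw [hd.deriv]
        have : α < deriv f t := by
          apply hball
          rw [Real.dist_eq, sub_zero, abs_of_pos ht.1]
          linarith [ht.2]
        linarith
    have := hgmono (Set.left_mem_Icc.2 (by positivity)) (Set.mem_Icc.2 ⟨hs0, hsδ⟩) h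
    simp only [hg, hf0] at this
    linarith [this]

private lemma conv_mem_aux (J u : ℝ → ℝ) (hJc : Continuous J) (hJ0 : ∀ z, 0 ≤ J z)
    (hJint : Integrable J) (hJ1 : ∫ z, J z = 1)
    (hurange : ∀ x, u x ∈ Set.Icc (0:ℝ) 1) (huc : Continuous u) (x : ℝ) :
    (∫ y, J (x - y) * u y) ∈ Set.Icc (0:ℝ) 1 := by
  have hconv_eq : (∫ y, J (x - y) * u y) = ∫ z, J z * u (x - z) := by
    have := MeasureTheory.integral_sub_left_eq_self (fun z => J z * u (x - z)) volume x
    simp only [sub_sub_cancel] at this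
    exact this
  constructor
  · exact integral_nonneg fun y => mul_nonneg (hJ0 _) (hurange y).1
  · rw [hconv_eq, ← hJ1]
    apply integral_mono_of_nonneg
    · exact Filter.Eventually.of_forall fun z => mul_nonneg (hJ0 _) (hurange _).1
    · exact hJint
    · exact Filter.Eventually.of_forall fun z => by
        calc J z * u (x - z) ≤ J z * 1 :=
              mul_le_mul_of_nonneg_left (hurange _).2 (hJ0 z)
          _ = J z := mul_one _

private lemma conv_bound_aux (J u : ℝ → ℝ) (r : ℝ) (hr : r ≤ 0)
    (hJc : Continuous J) (hJ0 : ∀ z, 0 ≤ J z)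
    (hJint : Integrable J) (hJ1 : ∫ z, J z = 1)
    (hJmom : Integrable (fun z => |z| * J z))
    (hurange : ∀ x, u x ∈ Set.Icc (0:ℝ) 1)
    (huc : Continuous u) :
    IntegrableOn (fun x => ∫ y, J (x - y) * u y) (Set.Ioc r 0) ∧
    |(∫ x in r..0, u x) - ∫ x in Set.Ioc r 0, (∫ y, J (x - y) * u y)| ≤ 2 * ∫ z, |z| * J z := by
  set U : ℝ → ℝ := fun t => ∫ x in (0:ℝ)..t, u x with hU
  have hu_ii : ∀ a b : ℝ, IntervalIntegrable u volume a b := fun a b => huc.intervalIntegrable a b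
  have hUc : Continuous U := intervalIntegral.continuous_primitive (fun a b => hu_ii a b) 0
  have hUsub : ∀ a b : ℝ, U b - U a = ∫ x in a..b, u x := fun a b =>
    intervalIntegral.integral_interval_sub_left (hu_ii 0 b) (hu_ii 0 a)
  have hUlip : ∀ a b : ℝ, |U b - U a| ≤ |b - a| := by
    intro a b
    rw [hUsub]
    calc |∫ x in a..b, u x| ≤ 1 * |b - a| := by
          rw [← Real.norm_eq_abs]
          apply intervalIntegral.norm_integral_le_of_norm_le_const
          intro x hx
          rw [Real.norm_eq_abs, abs_of_nonneg (hurange x).1]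
          exact (hurange x).2
      _ = |b - a| := one_mul _
  have hconv_eq : ∀ x : ℝ, (∫ y, J (x - y) * u y) = ∫ z, J z * u (x - z) := by
    intro x
    have := MeasureTheory.integral_sub_left_eq_self (fun z => J z * u (x - z)) volume x
    simp only [sub_sub_cancel] at this
    exact this
  have hGint : Integrable (fun p : ℝ × ℝ => J p.2)
      ((volume.restrict (Set.Ioc r 0)).prod volume) := by
    have h1 : Integrable (fun _ : ℝ => (1:ℝ)) (volume.restrict (Set.Ioc r 0)) :=
      integrableOn_const measure_Ioc_lt_top.ne
    simpa using h1.mul_prod hJint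
  have hF : Integrable (Function.uncurry fun x z => J z * u (x - z))
      ((volume.restrict (Set.Ioc r 0)).prod volume) := by
    apply hGint.mono
    · exact (((hJc.comp continuous_snd).mul
        (huc.comp (continuous_fst.sub continuous_snd)))).aestronglyMeasurable
    · filter_upwards with p
      obtain ⟨x, z⟩ := p
      simp only [Function.uncurry_apply_pair, Real.norm_eq_abs, abs_mul]
      calc |J z| * |u (x - z)| ≤ |J z| * 1 := by
            apply mul_le_mul_of_nonneg_left _ (abs_nonneg _)
            rw [abs_of_nonneg (hurange _).1]; exact (hurange _).2
        _ = |J z| := mul_one _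
  constructor
  · apply (hF.integral_prod_left).congr
    exact Filter.Eventually.of_forall fun x => (hconv_eq x).symm
  have hswap : (∫ x in Set.Ioc r 0, ∫ z, J z * u (x - z)) =
      ∫ z, ∫ x in Set.Ioc r 0, J z * u (x - z) :=
    MeasureTheory.integral_integral_swap hF
  have hinner : ∀ z : ℝ, (∫ x in Set.Ioc r 0, J z * u (x - z)) = J z * (U (-z) - U (r - z)) := by
    intro z
    rw [MeasureTheory.integral_const_mul]
    congr 1
    rw [← intervalIntegral.integral_of_le hr, intervalIntegral.integral_comp_sub_right u z,
      hUsub, zero_sub]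
  have hconvint : (∫ x in Set.Ioc r 0, (∫ y, J (x - y) * u y)) =
      ∫ z, J z * (U (-z) - U (r - z)) := by
    rw [MeasureTheory.setIntegral_congr_fun measurableSet_Ioc (fun x _ => hconv_eq x), hswap]
    exact integral_congr_ae (Filter.Eventually.of_forall hinner)
  have hleft : (∫ x in r..0, u x) = ∫ z, J z * (U 0 - U r) := by
    rw [← hUsub, MeasureTheory.integral_mul_const, hJ1, one_mul]
  have hsec : Integrable (fun z => J z * (U (-z) - U (r - z))) := by
    apply (hJint.const_mul |r|).mono
    · exact (hJc.mul ((hUc.comp continuous_neg).sub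
        (hUc.comp (continuous_const.sub continuous_id)))).aestronglyMeasurable
    · filter_upwards with z
      simp only [Real.norm_eq_abs, abs_mul, abs_abs]
      have h := hUlip (r - z) (-z)
      rw [show (-z) - (r - z) = -r by ring, abs_neg] at h
      nlinarith [abs_nonneg (J z), abs_nonneg (U (-z) - U (r - z)), abs_nonneg r]
  have hfir : Integrable (fun z => J z * (U 0 - U r)) := hJint.mul_const _
  rw [hleft, hconvint, ← MeasureTheory.integral_sub hfir hsec]
  calc |∫ z, (J z * (U 0 - U r) - J z * (U (-z) - U (r - z)))|
      ≤ ∫ z, 2 * (|z| * J z) := by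
        rw [← Real.norm_eq_abs]
        apply MeasureTheory.norm_integral_le_of_norm_le (hJmom.const_mul 2)
        filter_upwards with z
        rw [Real.norm_eq_abs, ← mul_sub, abs_mul]
        have h1 : |U 0 - U r - (U (-z) - U (r - z))| ≤ 2 * |z| := by
          have a1 := hUlip r (r - z)
          have a2 := hUlip (-z) 0
          rw [show (r - z) - r = -z by ring, abs_neg] at a1
          rw [show (0:ℝ) - (-z) = z by ring] at a2
          calc |U 0 - U r - (U (-z) - U (r - z))|
              = |(U (r - z) - U r) + (U 0 - U (-z))| := by congr 1; ring
            _ ≤ |U (r - z) - U r| + |U 0 - U (-z)| := abs_add_le _ _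
            _ ≤ |z| + |z| := add_le_add a1 a2
            _ = 2 * |z| := by ring
        calc |J z| * |U 0 - U r - (U (-z) - U (r - z))| ≤ |J z| * (2 * |z|) :=
              mul_le_mul_of_nonneg_left h1 (abs_nonneg _)
          _ = 2 * (|z| * J z) := by rw [abs_of_nonneg (hJ0 z)]; ring
    _ = 2 * ∫ z, |z| * J z := by rw [MeasureTheory.integral_const_mul]

theorem stmt2 (J f u : ℝ → ℝ) (c : ℝ)
    (hJc : Continuous J) (hJ0 : ∀ z, 0 ≤ J z)
    (hJint : Integrable J) (hJ1 : ∫ z, J z = 1)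
    (hJmom : Integrable (fun z => |z| * J z))
    (hf : ContDiff ℝ 1 f) (hf0 : f 0 = 0) (hf0' : 0 < deriv f 0)
    (hfpos : ∀ s ∈ Set.Icc (0:ℝ) 1, 0 ≤ f s)
    (hurange : ∀ x, u x ∈ Set.Icc (0:ℝ) 1)
    (hud : Differentiable ℝ u)
    (heq : ∀ x, (∫ y, J (x - y) * u y) - u x - c * deriv u x + f (u x) = 0)
    (hlim : Tendsto u atBot (nhds 0)) :
    IntegrableOn u (Set.Iic 0) := by
  have huc : Continuous u := hud.continuous
  have hu_ii : ∀ a b : ℝ, IntervalIntegrable u volume a b := fun a b => huc.intervalIntegrable a b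
  have hfu_ii : ∀ a b : ℝ, IntervalIntegrable (fun x => f (u x)) volume a b :=
    fun a b => ((hf.continuous).comp huc).intervalIntegrable a b
  -- bound on f over [0,1]
  obtain ⟨K, hK⟩ : ∃ K, ∀ s ∈ Set.Icc (0:ℝ) 1, ‖f s‖ ≤ K :=
    (isCompact_Icc).exists_bound_of_continuousOn (hf.continuous).continuousOn
  have hK0 : 0 ≤ K := by
    have := hK 0 ⟨le_rfl, zero_le_one⟩
    simpa [hf0] using this
  -- boundedness of c * deriv u
  have hcd_bdd : ∀ x, |c * deriv u x| ≤ 2 + K := by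
    intro x
    have h := heq x
    have hcm := conv_mem_aux J u hJc hJ0 hJint hJ1 hurange huc x
    have hfb := hK (u x) (hurange x)
    rw [Real.norm_eq_abs, abs_le] at hfb
    have hux := hurange x
    rw [abs_le]
    constructor <;> nlinarith [hcm.1, hcm.2, hux.1, hux.2, hfb.1, hfb.2]
  have hcd_ii : ∀ a b : ℝ, IntervalIntegrable (fun x => c * deriv u x) volume a b := by
    intro a b
    rw [intervalIntegrable_iff]
    apply Integrable.mono' (g := fun _ => 2 + K)
    · exact integrableOn_const measure_Ioc_lt_top.ne
    · exact (((measurable_deriv u).const_mul c).aestronglyMeasurable).restrict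
    · exact Filter.Eventually.of_forall fun x => hcd_bdd x
  -- FTC for the c * u' term
  have hftc : ∀ r : ℝ, (∫ x in r..0, c * deriv u x) = c * (u 0 - u r) := by
    intro r
    rcases eq_or_ne c 0 with h | h
    · simp [h]
    · rw [intervalIntegral.integral_const_mul]
      congr 1
      apply intervalIntegral.integral_deriv_eq_sub (fun x _ => hud x)
      have h2 := (hcd_ii r 0).const_mul c⁻¹
      simpa [inv_mul_cancel_left₀ h] using h2
  -- the key uniform bound
  set M : ℝ := ∫ z, |z| * J z with hM
  have hkey : ∀ r : ℝ, r ≤ 0 → (∫ x in r..0, f (u x)) ≤ 2 * M + 2 * |c| := by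
    intro r hr
    obtain ⟨hconvInt, habs⟩ :=
      conv_bound_aux J u r hr hJc hJ0 hJint hJ1 hJmom hurange huc
    have hconv_ii : IntervalIntegrable (fun x => ∫ y, J (x - y) * u y) volume r 0 := by
      rw [intervalIntegrable_iff, Set.uIoc_of_le hr]
      exact hconvInt
    have hsplit : (∫ x in r..0, f (u x)) =
        ((∫ x in r..0, u x) + ∫ x in r..0, c * deriv u x) -
          ∫ x in r..0, (∫ y, J (x - y) * u y) := by
      rw [← intervalIntegral.integral_add (hu_ii r 0) (hcd_ii r 0),
        ← intervalIntegral.integral_sub ((hu_ii r 0).add (hcd_ii r 0)) hconv_ii]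
      apply intervalIntegral.integral_congr
      intro x _
      have := heq x
      dsimp only
      linarith
    have hIoc : (∫ x in r..0, (∫ y, J (x - y) * u y)) =
        ∫ x in Set.Ioc r 0, (∫ y, J (x - y) * u y) := intervalIntegral.integral_of_le hr
    have hc2 : |c * (u 0 - u r)| ≤ 2 * |c| := by
      rw [abs_mul]
      have h0 := hurange 0
      have hrr := hurange r
      have : |u 0 - u r| ≤ 2 := by rw [abs_le]; constructor <;> nlinarith [h0.1, h0.2, hrr.1, hrr.2]
      nlinarith [abs_nonneg c]
    rw [hsplit, hftc r]
    have e1 : (∫ x in r..0, u x) - (∫ x in r..0, (∫ y, J (x - y) * u y)) ≤ 2 * M := by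
      rw [hIoc]
      exact le_trans (le_abs_self _) habs
    linarith [abs_le.1 hc2]
  -- lower bound for f near 0
  obtain ⟨δ, hδpos, hαb⟩ := fbound_aux f hf hf0 hf0'
  set α : ℝ := deriv f 0 / 2 with hα
  have hαpos : 0 < α := by positivity
  -- point x₁ below which u < δ
  have hev : ∀ᶠ x in atBot, u x < δ ∧ x ≤ 0 :=
    (hlim.eventually (eventually_lt_nhds hδpos)).and (eventually_le_atBot 0)
  obtain ⟨x₁, hx₁⟩ := eventually_atBot.1 hev
  have hx₁0 : x₁ ≤ 0 := (hx₁ x₁ le_rfl).2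
  -- uniform bound on ∫_r^{x₁} u
  have hstep : ∀ r : ℝ, r ≤ x₁ → (∫ x in r..x₁, u x) ≤ (2 * M + 2 * |c|) / α := by
    intro r hrx
    have hr0 : r ≤ 0 := le_trans hrx hx₁0
    have h1 : α * ∫ x in r..x₁, u x = ∫ x in r..x₁, α * u x :=
      (intervalIntegral.integral_const_mul α u).symm
    have h2 : (∫ x in r..x₁, α * u x) ≤ ∫ x in r..x₁, f (u x) := by
      apply intervalIntegral.integral_mono_on hrx
        ((continuous_const.mul huc).intervalIntegrable _ _) (hfu_ii r x₁)
      intro x hx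
      exact hαb (u x) (hurange x).1 (le_of_lt (hx₁ x hx.2).1)
    have h3 : (∫ x in r..x₁, f (u x)) ≤ ∫ x in r..0, f (u x) := by
      have hadd := intervalIntegral.integral_add_adjacent_intervals (hfu_ii r x₁) (hfu_ii x₁ 0)
      have hpos : 0 ≤ ∫ x in x₁..0, f (u x) :=
        intervalIntegral.integral_nonneg hx₁0 fun x _ => hfpos _ (hurange x)
      linarith
    have h4 := hkey r hr0
    rw [le_div_iff₀ hαpos]
    nlinarith
  -- integrability on Iic x₁
  have hIic : IntegrableOn u (Set.Iic x₁) := by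
    apply MeasureTheory.integrableOn_Iic_of_intervalIntegral_norm_bounded
      ((2 * M + 2 * |c|) / α) x₁ (a := fun r : ℝ => min r x₁) (l := atBot)
    · intro i
      exact (huc.integrableOn_Ioc)
    · exact tendsto_atBot_mono (fun r => min_le_left r x₁) tendsto_id
    · apply Filter.Eventually.of_forall
      intro r
      have he : (∫ x in (min r x₁)..x₁, ‖u x‖) = ∫ x in (min r x₁)..x₁, u x := by
        apply intervalIntegral.integral_congr
        intro x _
        show ‖u x‖ = u x
        rw [Real.norm_eq_abs, abs_of_nonneg (hurange x).1]
      rw [he]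
      exact hstep _ (min_le_right _ _)
  -- conclude
  have hsub : Set.Iic (0:ℝ) ⊆ Set.Iic x₁ ∪ Set.Icc x₁ 0 := by
    intro x hx
    rcases le_or_gt x x₁ with h | h
    · exact Or.inl h
    · exact Or.inr ⟨le_of_lt h, hx⟩
  exact (hIic.union (huc.integrableOn_Icc)).mono_set hsub
end

section
/- Let J satisfy (j1) and let f be C¹ with f(0)=0 and f'(0) > 1. Then there is no positive bounded solution u : ℝ → (0,1] of J⋆u - u + f(u) = 0 with lim_{x→-∞} u(x) = 0. -/
open MeasureTheory Real Filter

theorem stmt5 (J f : ℝ → ℝ)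
    (hJc : Continuous J) (hJ0 : ∀ z, 0 ≤ J z)
    (hJint : Integrable J) (hJ1 : ∫ z, J z = 1)
    (hJmom : Integrable (fun z => |z| * J z))
    (hf : ContDiff ℝ 1 f) (hf0 : f 0 = 0) (hf0' : 1 < deriv f 0) :
    ¬ ∃ u : ℝ → ℝ, (∀ x, 0 < u x ∧ u x ≤ 1) ∧
      (∀ x, (∫ y, J (x - y) * u y) - u x + f (u x) = 0) ∧
      Tendsto u atBot (nhds 0) := by
  rintro ⟨u, hu, heq, hlim⟩
  -- The convolution is nonnegative, so f (u x) ≤ u x for all x.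
  have hle : ∀ x, f (u x) ≤ u x := by
    intro x
    have hnn : 0 ≤ ∫ y, J (x - y) * u y :=
      integral_nonneg fun y => mul_nonneg (hJ0 _) (hu y).1.le
    have := heq x
    linarith
  -- Since f'(0) > 1, f t > t for small positive t.
  have hderiv : HasDerivAt f (deriv f 0) 0 :=
    ((hf.differentiable one_ne_zero) 0).hasDerivAt
  have hslope : Tendsto (slope f 0) (nhdsWithin 0 {0}ᶜ) (nhds (deriv f 0)) :=
    hasDerivAt_iff_tendsto_slope.mp hderiv
  have hev : ∀ᶠ t in nhdsWithin 0 {0}ᶜ, 1 < slope f 0 t :=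
    hslope.eventually (eventually_gt_nhds hf0')
  have hev' : ∀ᶠ t in nhdsWithin (0:ℝ) (Set.Ioi 0), 1 < slope f 0 t :=
    hev.filter_mono (nhdsWithin_mono _ (by intro t ht; exact ne_of_gt ht))
  rw [eventually_nhdsWithin_iff] at hev'
  rcases Metric.eventually_nhds_iff.mp hev' with ⟨δ, hδ, hδ'⟩
  -- Find x with 0 < u x < δ
  have : ∀ᶠ x in atBot, u x ∈ Metric.ball (0:ℝ) δ :=
    hlim.eventually (Metric.ball_mem_nhds 0 hδ)
  rcases this.exists with ⟨x, hx⟩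
  rw [Metric.mem_ball, Real.dist_eq, sub_zero] at hx
  have hux : 0 < u x := (hu x).1
  have huxδ : u x < δ := (abs_lt.mp hx).2
  have hs : 1 < slope f 0 (u x) := by
    apply hδ' (y := u x)
    · simpa [Real.dist_eq, abs_of_pos hux] using huxδ
    · exact Set.mem_Ioi.mpr hux
  rw [slope_def_field] at hs
  rw [hf0, sub_zero, sub_zero] at hs
  have : u x < f (u x) := (one_lt_div hux).mp hs
  linarith [hle x]
end

section
/- Let J be continuous, nonnegative, with ∫J = 1, satisfying J(a) > 0 and J(b) > 0 for some a < 0 < b (hypothesis (MP)), and let c : ℝ → ℝ be bounded. If u ∈ L^∞(ℝ) satisfies u ≤ 0 a.e. and J⋆u - u + c(x)u ≥ 0 a.e. in ℝ, then either ess sup_K u < 0 for every compact K ⊂ ℝ, or u = 0 a.e. -/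
open MeasureTheory Real Filter
open scoped Convolution

theorem stmt10 (J c u : ℝ → ℝ)
    (hJc : Continuous J) (hJ0 : ∀ z, 0 ≤ J z) (hJ1 : ∫ z, J z = 1)
    (hMP : ∃ a b : ℝ, a < 0 ∧ 0 < b ∧ 0 < J a ∧ 0 < J b)
    (hcb : ∃ A, ∀ x, |c x| ≤ A)
    (hum : Measurable u) (hub : ∃ A, ∀ x, |u x| ≤ A)
    (hneg : ∀ᵐ x, u x ≤ 0)
    (hineq : ∀ᵐ x, 0 ≤ (∫ y, J (x - y) * u y) - u x + c x * u x) :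
    (∀ K : Set ℝ, IsCompact K → ∃ ε > 0, ∀ᵐ x ∂(volume.restrict K), u x ≤ -ε) ∨
      (∀ᵐ x, u x = 0) := by
  classical
  obtain ⟨a, b, ha, hb, hJa, hJb⟩ := hMP
  obtain ⟨A, hA⟩ := hcb
  obtain ⟨B, hB⟩ := hub
  have hA0 : 0 ≤ A := (abs_nonneg _).trans (hA 0)
  have hB0 : 0 ≤ B := (abs_nonneg _).trans (hB 0)
  have hA1 : (0:ℝ) < 1 + A := by linarith
  have hum' : AEStronglyMeasurable u volume := hum.aestronglyMeasurable
  have hJint : Integrable J := by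
    by_contra h
    rw [integral_undef h] at hJ1; norm_num at hJ1
  have key_int : ∀ (φ : ℝ → ℝ), Integrable φ → ∀ x : ℝ,
      Integrable (fun y => φ (x - y) * u y) := by
    intro φ hφ x
    have h1 : Integrable (fun y => φ (x - y)) := hφ.comp_sub_left x
    have h2 := h1.bdd_mul (c := B) hum' (ae_of_all _ fun y => by simpa [Real.norm_eq_abs] using hB y)
    simpa [mul_comm] using h2
  set w : ℝ → ℝ := fun x => ∫ y, J (x - y) * u y with hwdef
  have hwx : ∀ x, w x = ∫ y, J (x - y) * u y := fun x => rfl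
  -- w ≤ 0 everywhere
  have hw_nonpos : ∀ x, w x ≤ 0 := by
    intro x
    rw [hwx]
    apply integral_nonpos_of_ae
    filter_upwards [hneg] with y hy
    exact mul_nonpos_iff.2 (Or.inl ⟨hJ0 _, hy⟩)
  -- (1+A) u ≤ w a.e.
  have hkey : ∀ᵐ x, (1 + A) * u x ≤ w x := by
    filter_upwards [hneg, hineq] with x h1 h2
    rw [hwx]
    have hc1 := (abs_le.1 (hA x)).1
    have hc2 := (abs_le.1 (hA x)).2
    nlinarith
  -- local integrability of u
  have hu_loc : LocallyIntegrable u := by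
    intro x
    refine ⟨Metric.ball x 1, Metric.ball_mem_nhds x one_pos, ?_⟩
    refine Integrable.mono' (g := fun _ => B) ?_ hum'.restrict ?_
    · exact integrableOn_const measure_ball_lt_top.ne
    · filter_upwards with y using by simpa [Real.norm_eq_abs] using hB y
  -- continuity of w
  have hw_cont : Continuous w := by
    rw [Metric.continuous_iff]
    intro x₀ ε hε
    have hε3 : 0 < ε / (3 * (B + 1)) := by positivity
    obtain ⟨φ, hφsupp, hφL1, hφcont, hφint⟩ :=
      hJint.exists_hasCompactSupport_integral_sub_le hε3
    set v : ℝ → ℝ := fun x => ∫ y, φ (x - y) * u y with hvdef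
    have hv_cont : Continuous v := by
      have hconv : Continuous (φ ⋆[ContinuousLinearMap.mul ℝ ℝ, volume] u) :=
        hφsupp.continuous_convolution_left _ hφcont hu_loc
      have heq : (φ ⋆[ContinuousLinearMap.mul ℝ ℝ, volume] u) = v := by
        funext x
        rw [convolution_mul_swap]
      rwa [heq] at hconv
    have hdiff : ∀ x, |w x - v x| ≤ ε / 3 := by
      intro x
      have h1 : w x - v x = ∫ y, (J (x - y) - φ (x - y)) * u y := by
        rw [hwx, hvdef]
        rw [← integral_sub (key_int J hJint x) (key_int φ hφint x)]
        congr 1; funext y; ring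
      have hint1 : Integrable (fun y => (J (x - y) - φ (x - y)) * u y) :=
        key_int (fun z => J z - φ z) (hJint.sub hφint) x
      have hint2 : Integrable (fun y => |J (x - y) - φ (x - y)| * (B + 1)) :=
        (((hJint.sub hφint).comp_sub_left x).abs).mul_const _
      calc |w x - v x| = |∫ y, (J (x - y) - φ (x - y)) * u y| := by rw [h1]
        _ ≤ ∫ y, |(J (x - y) - φ (x - y)) * u y| := by
            have h := norm_integral_le_integral_norm (μ := volume)
              (fun y => (J (x - y) - φ (x - y)) * u y)
            simp only [Real.norm_eq_abs] at h
            exact h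
        _ ≤ ∫ y, |J (x - y) - φ (x - y)| * (B + 1) := by
            apply integral_mono hint1.abs hint2
            intro y
            dsimp only
            rw [abs_mul]
            exact mul_le_mul_of_nonneg_left ((hB y).trans (by linarith)) (abs_nonneg _)
        _ = (∫ y, |J (x - y) - φ (x - y)|) * (B + 1) := integral_mul_const _ _
        _ = (∫ z, |J z - φ z|) * (B + 1) := by
            rw [integral_sub_left_eq_self (fun z => |J z - φ z|) volume x]
        _ ≤ (ε / (3 * (B + 1))) * (B + 1) := by
            apply mul_le_mul_of_nonneg_right _ (by linarith)
            simpa [Real.norm_eq_abs] using hφL1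
        _ = ε / 3 := by field_simp
    obtain ⟨θ, hθ, hθ'⟩ := Metric.continuous_iff.mp hv_cont x₀ (ε / 3) (by positivity)
    refine ⟨θ, hθ, fun x hx => ?_⟩
    have h1 := hθ' x hx
    have h2 := hdiff x
    have h3 := hdiff x₀
    rw [Real.dist_eq] at h1 ⊢
    have : |w x - w x₀| ≤ |w x - v x| + |v x - v x₀| + |v x₀ - w x₀| := by
      have := abs_sub_le (w x) (v x) (w x₀)
      have := abs_sub_le (v x) (v x₀) (w x₀)
      have := abs_sub_comm (v x₀) (w x₀)
      linarith [abs_sub_le (w x) (v x) (w x₀), abs_sub_le (v x) (v x₀) (w x₀)]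
    have h4 : |v x₀ - w x₀| = |w x₀ - v x₀| := abs_sub_comm _ _
    linarith
  -- positivity neighborhoods of a and b
  obtain ⟨δa, hδa, hJa'⟩ : ∃ δ > 0, ∀ t : ℝ, |t - a| < δ → 0 < J t := by
    have h := (hJc.tendsto a).eventually (eventually_gt_nhds hJa)
    rw [Metric.eventually_nhds_iff] at h
    obtain ⟨θ, hθ, h⟩ := h
    exact ⟨θ, hθ, fun t ht => h (by rwa [Real.dist_eq])⟩
  obtain ⟨δb, hδb, hJb'⟩ : ∃ δ > 0, ∀ t : ℝ, |t - b| < δ → 0 < J t := by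
    have h := (hJc.tendsto b).eventually (eventually_gt_nhds hJb)
    rw [Metric.eventually_nhds_iff] at h
    obtain ⟨θ, hθ, h⟩ := h
    exact ⟨θ, hθ, fun t ht => h (by rwa [Real.dist_eq])⟩
  set δ : ℝ := min δa δb with hδdef
  have hδ : 0 < δ := lt_min hδa hδb
  by_cases hS : ∃ x₀, w x₀ = 0
  · -- u = 0 a.e.
    obtain ⟨x₀, hx₀⟩ := hS
    right
    -- Lemma P: at a zero of w, u vanishes a.e. near x - a and x - b
    have lemP : ∀ x, w x = 0 → ∀ᵐ y, ((y ∈ Metric.ball (x - a) δ → u y = 0) ∧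
        (y ∈ Metric.ball (x - b) δ → u y = 0)) := by
      intro x hx
      have hnn : (0 : ℝ → ℝ) ≤ᵐ[volume] fun y => -(J (x - y) * u y) := by
        filter_upwards [hneg] with y hy
        have : J (x - y) * u y ≤ 0 := mul_nonpos_iff.2 (Or.inl ⟨hJ0 _, hy⟩)
        simpa using this
      have hint := (key_int J hJint x).neg
      have hz0 : (∫ y, -(J (x - y) * u y)) = 0 := by
        rw [integral_neg]
        rw [hwx] at hx
        rw [hx, neg_zero]
      have hzero : ∀ᵐ y, J (x - y) * u y = 0 := by
        have h := (integral_eq_zero_iff_of_nonneg_ae hnn hint).mp hz0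
        filter_upwards [h] with y hy
        have h2 : -(J (x - y) * u y) = 0 := hy
        linarith
      filter_upwards [hzero] with y hy
      constructor
      · intro hmem
        rw [Metric.mem_ball, Real.dist_eq] at hmem
        have habs : |(x - y) - a| < δa := by
          have he : (x - y) - a = -(y - (x - a)) := by ring
          rw [he, abs_neg]
          exact lt_of_lt_of_le hmem (min_le_left _ _)
        exact (mul_eq_zero.mp hy).resolve_left (ne_of_gt (hJa' _ habs))
      · intro hmem
        rw [Metric.mem_ball, Real.dist_eq] at hmem
        have habs : |(x - y) - b| < δb := by
          have he : (x - y) - b = -(y - (x - b)) := by ring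
          rw [he, abs_neg]
          exact lt_of_lt_of_le hmem (min_le_right _ _)
        exact (mul_eq_zero.mp hy).resolve_left (ne_of_gt (hJb' _ habs))
    -- Lemma Q: if u = 0 a.e. on a ball, then w = 0 on that ball
    have lemQ : ∀ p : ℝ, (∀ᵐ y, y ∈ Metric.ball p δ → u y = 0) →
        ∀ z ∈ Metric.ball p δ, w z = 0 := by
      intro p hp z hz
      have h1 : ∀ᵐ y, y ∈ Metric.ball p δ → w y = 0 := by
        filter_upwards [hp, hineq] with y hy1 hy2
        intro hmem
        have hu0 := hy1 hmem
        rw [hu0] at hy2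
        have h3 : 0 ≤ w y := by rw [hwx]; linarith
        exact le_antisymm (hw_nonpos y) h3
      have h2 : w =ᵐ[volume.restrict (Metric.ball p δ)] (fun _ => (0:ℝ)) :=
        (ae_restrict_iff' measurableSet_ball).mpr h1
      exact Measure.eqOn_of_ae_eq h2 hw_cont.continuousOn continuousOn_const
        (by rw [Metric.isOpen_ball.interior_eq]; exact subset_closure) hz
    -- one propagation step
    have step' : ∀ v : ℝ, v = a ∨ v = b → ∀ x, w x = 0 →
        ∀ z ∈ Metric.ball (x - v) δ, w z = 0 := by
      rintro v (rfl | rfl) x hx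
      · exact lemQ _ (by filter_upwards [lemP x hx] with y hy; exact hy.1)
      · exact lemQ _ (by filter_upwards [lemP x hx] with y hy; exact hy.2)
    -- iterated propagation
    have iter : ∀ v : ℝ, v = a ∨ v = b → ∀ n : ℕ, ∀ x, w x = 0 →
        ∀ z ∈ Metric.ball (x - ((n:ℝ) + 1) * v) (((n:ℝ) + 1) * δ), w z = 0 := by
      intro v hv n
      induction n with
      | zero =>
        intro x hx z hz
        apply step' v hv x hx
        simpa using hz
      | succ n ih =>
        intro x hx z hz
        have hcast : (((n + 1 : ℕ)) : ℝ) = (n : ℝ) + 1 := by push_cast; ring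
        rw [Metric.mem_ball, Real.dist_eq, hcast] at hz
        set N : ℝ := (n : ℝ) + 1 with hN
        have hN1 : (1:ℝ) ≤ N := by
          rw [hN]
          have : (0:ℝ) ≤ (n:ℝ) := Nat.cast_nonneg n
          linarith
        set d : ℝ := z - (x - (N + 1) * v) with hd
        have hdabs : |d| < (N + 1) * δ := by
          rw [hd]
          exact hz
        set z' : ℝ := x - N * v + d * N / (N + 1) with hz'
        have hNpos : (0:ℝ) < N := by linarith
        have hN1pos : (0:ℝ) < N + 1 := by linarith
        have hz'mem : z' ∈ Metric.ball (x - N * v) (N * δ) := by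
          rw [Metric.mem_ball, Real.dist_eq]
          have he : z' - (x - N * v) = d * N / (N + 1) := by rw [hz']; ring
          rw [he, abs_div, abs_mul, abs_of_pos hNpos, abs_of_pos hN1pos,
            div_lt_iff₀ hN1pos]
          have h5 := mul_lt_mul_of_pos_right hdabs hNpos
          linarith [h5]
        have h0 : w z' = 0 := ih x hx z' (by rwa [hN] at hz'mem)
        apply step' v hv z' h0
        rw [Metric.mem_ball, Real.dist_eq]
        have he : z - (z' - v) = d / (N + 1) := by rw [hz', hd]; field_simp; ring
        rw [he, abs_div, abs_of_pos hN1pos, div_lt_iff₀ hN1pos]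
        linarith [hdabs]
    -- points going to the right are zeros of w
    have hright : ∀ m : ℕ, w (x₀ - ((m:ℝ) + 1) * a) = 0 := by
      intro m
      exact iter a (Or.inl rfl) m x₀ hx₀ _ (Metric.mem_ball_self (by positivity))
    -- every point is a zero of w
    have hall : ∀ z, w z = 0 := by
      intro z
      set n : ℕ := ⌈max ((-a) / δ) ((x₀ - a - z) / b)⌉₊ with hn
      have hn1 : ((-a) / δ) ≤ (n : ℝ) := le_trans (le_max_left _ _) (Nat.le_ceil _)
      have hn2 : ((x₀ - a - z) / b) ≤ (n : ℝ) := le_trans (le_max_right _ _) (Nat.le_ceil _)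
      have hna : -a < ((n:ℝ) + 1) * δ := by
        rw [div_le_iff₀ hδ] at hn1
        have : ((n:ℝ) + 1) * δ = (n:ℝ) * δ + δ := by ring
        linarith
      have hnb : x₀ - a - z ≤ ((n:ℝ) + 1) * b := by
        rw [div_le_iff₀ hb] at hn2
        have : ((n:ℝ) + 1) * b = (n:ℝ) * b + b := by ring
        linarith
      set r2 : ℝ := (z + ((n:ℝ) + 1) * b - x₀) / (-a) with hr2
      have hnum : -a ≤ z + ((n:ℝ) + 1) * b - x₀ := by linarith
      have hr2ge1 : (1:ℝ) ≤ r2 := by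
        rw [hr2, le_div_iff₀ (by linarith : (0:ℝ) < -a)]
        linarith
      set m : ℕ := ⌈r2⌉₊ with hm
      have hmge : r2 ≤ (m : ℝ) := Nat.le_ceil _
      have hmlt : (m : ℝ) < r2 + 1 := Nat.ceil_lt_add_one (by linarith)
      have hm0 : 0 < m := Nat.ceil_pos.mpr (by linarith)
      have hm1 : 1 ≤ m := hm0
      set k : ℕ := m - 1 with hk
      have hkm : ((k:ℝ) + 1) = (m : ℝ) := by
        rw [hk, Nat.cast_sub hm1]
        push_cast
        ring
      have hx : w (x₀ - (m:ℝ) * a) = 0 := by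
        rw [← hkm]; exact hright k
      have hr2a : z + ((n:ℝ) + 1) * b - x₀ = r2 * (-a) := by
        rw [hr2, div_mul_cancel₀ _ (ne_of_gt (by linarith : (0:ℝ) < -a))]
      have hE : z - ((x₀ - (m:ℝ) * a) - ((n:ℝ) + 1) * b) = a * ((m:ℝ) - r2) := by
        calc z - ((x₀ - (m:ℝ) * a) - ((n:ℝ) + 1) * b)
            = (z + ((n:ℝ) + 1) * b - x₀) + (m:ℝ) * a := by ring
          _ = r2 * (-a) + (m:ℝ) * a := by rw [hr2a]
          _ = a * ((m:ℝ) - r2) := by ring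
      have hp1 : a * ((m:ℝ) - r2) ≤ 0 :=
        mul_nonpos_of_nonpos_of_nonneg ha.le (by linarith)
      have hp2 : a * 1 < a * ((m:ℝ) - r2) :=
        mul_lt_mul_of_neg_left (by linarith) ha
      have hp3 : (0:ℝ) < ((n:ℝ) + 1) * δ := by positivity
      have hmem : z ∈ Metric.ball ((x₀ - (m:ℝ) * a) - ((n:ℝ) + 1) * b) (((n:ℝ) + 1) * δ) := by
        rw [Metric.mem_ball, Real.dist_eq, abs_lt, hE]
        constructor
        · have : a * 1 = a := by ring
          linarith
        · linarith
      exact iter b (Or.inr rfl) n _ hx z hmem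
    -- conclude u = 0 a.e.
    have hq : ∀ q : ℚ, ∀ᵐ y, y ∈ Metric.ball ((q:ℝ)) δ → u y = 0 := by
      intro q
      have h := lemP ((q:ℝ) + a) (hall _)
      have he : (q:ℝ) + a - a = (q:ℝ) := by ring
      rw [he] at h
      filter_upwards [h] with y hy hmem
      exact hy.1 hmem
    have hballs : ∀ᵐ y, ∀ q : ℚ, y ∈ Metric.ball ((q:ℝ)) δ → u y = 0 := ae_all_iff.mpr hq
    filter_upwards [hballs] with y hy
    obtain ⟨q, hq'⟩ := exists_rat_near y hδ
    exact hy q (by rw [Metric.mem_ball, Real.dist_eq]; exact hq')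
  · -- first alternative
    push_neg at hS
    left
    intro K hK
    rcases K.eq_empty_or_nonempty with rfl | hKne
    · exact ⟨1, one_pos, by simp⟩
    obtain ⟨xm, hxmK, hmax⟩ := hK.exists_isMaxOn hKne hw_cont.continuousOn
    have hwm : w xm < 0 := lt_of_le_of_ne (hw_nonpos xm) (hS xm)
    refine ⟨(-w xm) / (1 + A), div_pos (by linarith) hA1, ?_⟩
    have h1 : ∀ᵐ x ∂(volume.restrict K), (1 + A) * u x ≤ w x := ae_restrict_of_ae hkey
    have h2 : ∀ᵐ x ∂(volume.restrict K), x ∈ K := ae_restrict_mem hK.measurableSet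
    filter_upwards [h1, h2] with x hx hxK
    have h3 : w x ≤ w xm := hmax hxK
    have h4 : u x ≤ w xm / (1 + A) := (le_div_iff₀ hA1).mpr (by nlinarith)
    have h5 : -((-w xm) / (1 + A)) = w xm / (1 + A) := by ring
    linarith
end

section
/- Let f be an ignition nonlinearity: f ∈ C¹([0,1]) with f ≡ 0 on [0,ρ], f > 0 on (ρ,1), f(1)=0, for some ρ ∈ (0,1). Let J satisfy (j1). If u is a monotone travelling front of J⋆u - u - cu' + f(u) = 0 with u(-∞)=0, u(+∞)=1, then μ c² - ν|c| ≤ 0, where μ = min(ρ, 1-ρ) and ν = ∫_ℝ J(z)|z| dz. In particular |c| ≤ ν/μ. -/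
open MeasureTheory Real Filter

private lemma shift_bound (u : ℝ → ℝ) (hc : Continuous u) (hm : Monotone u)
    (h0 : ∀ x, 0 ≤ u x) (h1 : ∀ x, u x ≤ 1) (z a b : ℝ) (hab : a ≤ b) :
    ∫ x in Set.Ioc a b, |u (x - z) - u x| ≤ |z| := by
  rw [← intervalIntegral.integral_of_le hab]
  have hint : ∀ p q : ℝ, IntervalIntegrable u volume p q := fun p q =>
    hc.intervalIntegrable p q
  have hintz : IntervalIntegrable (fun x => u (x - z)) volume a b :=
    (hc.comp (continuous_id.sub continuous_const)).intervalIntegrable a b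
  have key : ∀ p q : ℝ, 0 ≤ q - p → ∫ x in p..q, u x ≤ q - p := by
    intro p q h
    calc ∫ x in p..q, u x ≤ ∫ x in p..q, (1:ℝ) :=
          intervalIntegral.integral_mono_on (by linarith) (hint p q)
            intervalIntegrable_const (fun x _ => h1 x)
      _ = q - p := by simp
  have nn : ∀ p q : ℝ, p ≤ q → 0 ≤ ∫ x in p..q, u x := fun p q h =>
    intervalIntegral.integral_nonneg h (fun x _ => h0 x)
  rcases le_or_gt 0 z with hz | hz
  · have habs : ∀ x, |u (x - z) - u x| = u x - u (x - z) := by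
      intro x
      rw [abs_of_nonpos (by linarith [hm (show x - z ≤ x by linarith)])]
      ring
    rw [intervalIntegral.integral_congr (fun x _ => habs x),
      intervalIntegral.integral_sub (hint a b) hintz,
      intervalIntegral.integral_comp_sub_right u z]
    have e1 : ∫ x in a..b, u x = (∫ x in (a-z)..b, u x) - ∫ x in (a-z)..a, u x := by
      rw [← intervalIntegral.integral_add_adjacent_intervals (hint (a-z) a) (hint a b)]; ring
    have e2 : ∫ x in (a-z)..(b-z), u x = (∫ x in (a-z)..b, u x) - ∫ x in (b-z)..b, u x := by
      rw [← intervalIntegral.integral_add_adjacent_intervals (hint (a-z) (b-z)) (hint (b-z) b)]; ring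
    have k1 := key (b - z) b (by linarith)
    have k2 := nn (a - z) a (by linarith)
    rw [abs_of_nonneg hz, e1, e2]; linarith
  · have habs : ∀ x, |u (x - z) - u x| = u (x - z) - u x := by
      intro x
      exact abs_of_nonneg (by linarith [hm (show x ≤ x - z by linarith)])
    rw [intervalIntegral.integral_congr (fun x _ => habs x),
      intervalIntegral.integral_sub hintz (hint a b),
      intervalIntegral.integral_comp_sub_right u z]
    have e1 : ∫ x in a..b, u x = (∫ x in a..(b-z), u x) - ∫ x in b..(b-z), u x := by
      rw [← intervalIntegral.integral_add_adjacent_intervals (hint a b) (hint b (b-z))]; ring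
    have e2 : ∫ x in (a-z)..(b-z), u x = (∫ x in a..(b-z), u x) - ∫ x in a..(a-z), u x := by
      rw [← intervalIntegral.integral_add_adjacent_intervals (hint a (a-z)) (hint (a-z) (b-z))]; ring
    have k1 := key b (b - z) (by linarith)
    have k2 := nn a (a - z) (by linarith)
    rw [abs_of_neg hz, e1, e2]; linarith

theorem stmt11 (J f u : ℝ → ℝ) (c ρ : ℝ) (hρ : ρ ∈ Set.Ioo (0:ℝ) 1)
    (hJc : Continuous J) (hJ0 : ∀ z, 0 ≤ J z)
    (hJint : Integrable J) (hJ1 : ∫ z, J z = 1)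
    (hJmom : Integrable (fun z => |z| * J z))
    (hf : ContDiffOn ℝ 1 f (Set.Icc 0 1))
    (hfig : ∀ s ∈ Set.Icc (0:ℝ) ρ, f s = 0)
    (hfpos : ∀ s ∈ Set.Ioo ρ 1, 0 < f s) (hf1 : f 1 = 0)
    (hmono : Monotone u) (hud : Differentiable ℝ u)
    (heq : ∀ x, (∫ y, J (x - y) * u y) - u x - c * deriv u x + f (u x) = 0)
    (hlm : Tendsto u atBot (nhds 0)) (hlp : Tendsto u atTop (nhds 1)) :
    min ρ (1 - ρ) * c ^ 2 - (∫ z, |z| * J z) * |c| ≤ 0 := by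
  obtain ⟨hρ0, hρ1⟩ := hρ
  set ν := ∫ z, |z| * J z with hν
  have hucont : Continuous u := hud.continuous
  have hu0 : ∀ x, 0 ≤ u x := by
    intro x
    exact le_of_tendsto hlm (eventually_atBot.2 ⟨x, fun y hy => hmono hy⟩)
  have hu1 : ∀ x, u x ≤ 1 := by
    intro x
    exact ge_of_tendsto hlp (eventually_atTop.2 ⟨x, fun y hy => hmono hy⟩)
  have hdle : ∀ x z : ℝ, |u (x - z) - u x| ≤ 1 := fun x z =>
    abs_le.2 ⟨by linarith [hu0 (x-z), hu1 x], by linarith [hu1 (x-z), hu0 x]⟩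
  -- the nonlocal diffusion term
  set K : ℝ → ℝ := fun x => ∫ z, J z * (u (x - z) - u x) with hKdef
  have hIu : ∀ x, Integrable (fun z => J z * u (x - z)) := by
    intro x
    refine hJint.mono ((hJc.mul (hucont.comp (continuous_const.sub
      continuous_id))).aestronglyMeasurable) ?_
    filter_upwards with z
    rw [Real.norm_eq_abs, Real.norm_eq_abs, abs_mul, abs_of_nonneg (hJ0 z),
      abs_of_nonneg (hu0 (x - z))]
    nlinarith [hJ0 z, hu1 (x - z)]
  have hKeq : ∀ x, (∫ y, J (x - y) * u y) - u x = K x := by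
    intro x
    have h1 : (∫ z, J (x - (x - z)) * u (x - z)) = ∫ y, J (x - y) * u y :=
      integral_sub_left_eq_self (fun y => J (x - y) * u y) volume x
    simp only [sub_sub_cancel] at h1
    have h2 : u x = ∫ z, J z * u x := by
      rw [integral_mul_const, hJ1, one_mul]
    rw [← h1, hKdef]
    conv_lhs => rw [h2]
    rw [← integral_sub (hIu x) (hJint.mul_const (u x))]
    congr 1; funext z; ring
  have hIx : ∀ x, Integrable (fun z => J z * (u (x - z) - u x)) := by
    intro x
    refine (hIu x).sub (hJint.mul_const (u x)) |>.congr ?_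
    filter_upwards with z
    simp only [Pi.sub_apply]; ring
  have hKcont : Continuous K := by
    refine continuous_of_dominated (bound := J) (fun x => (hIx x).aestronglyMeasurable)
      ?_ hJint ?_
    · intro x
      filter_upwards with z
      rw [Real.norm_eq_abs, abs_mul, abs_of_nonneg (hJ0 z)]
      nlinarith [hdle x z, hJ0 z, abs_nonneg (u (x - z) - u x)]
    · filter_upwards with z
      exact continuous_const.mul ((hucont.comp (continuous_id.sub
        continuous_const)).sub hucont)
  -- L¹ bound on K over finite intervals
  have hνb : ∀ a b : ℝ, a ≤ b → ∫ x in Set.Ioc a b, |K x| ≤ ν := by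
    intro a b hab
    set μ := volume.restrict (Set.Ioc a b) with hμ
    have hone : Integrable (fun _ : ℝ => (1:ℝ)) μ :=
      integrableOn_const measure_Ioc_lt_top.ne
    have hcont2 : Continuous (fun p : ℝ × ℝ => J p.2 * |u (p.1 - p.2) - u p.1|) :=
      (hJc.comp continuous_snd).mul ((hucont.comp (continuous_fst.sub
        continuous_snd)).sub (hucont.comp continuous_fst)).abs
    have hprod : Integrable (Function.uncurry fun x z => J z * |u (x - z) - u x|)
        (μ.prod volume) := by
      refine (hone.mul_prod hJint).mono hcont2.aestronglyMeasurable ?_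
      filter_upwards with p
      rw [Function.uncurry_apply_pair]
      rw [Real.norm_eq_abs, Real.norm_eq_abs, abs_mul, abs_abs, abs_of_nonneg (hJ0 p.2),
        one_mul, abs_of_nonneg (hJ0 p.2)]
      nlinarith [hdle p.1 p.2, hJ0 p.2, abs_nonneg (u (p.1 - p.2) - u p.1)]
    have hKabs : ∀ x, |K x| ≤ ∫ z, J z * |u (x - z) - u x| := by
      intro x
      rw [hKdef, ← Real.norm_eq_abs]
      calc ‖∫ z, J z * (u (x - z) - u x)‖ ≤ ∫ z, ‖J z * (u (x - z) - u x)‖ :=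
            norm_integral_le_integral_norm _
        _ = ∫ z, J z * |u (x - z) - u x| := by
            congr 1; funext z
            rw [Real.norm_eq_abs, abs_mul, abs_of_nonneg (hJ0 z)]
    have hG : Integrable (fun x => ∫ z, J z * |u (x - z) - u x|) μ :=
      hprod.integral_prod_left
    calc ∫ x in Set.Ioc a b, |K x| ≤ ∫ x, (∫ z, J z * |u (x - z) - u x|) ∂μ :=
          integral_mono (hKcont.abs.integrableOn_Ioc) hG (fun x => hKabs x)
      _ = ∫ z, ∫ x, J z * |u (x - z) - u x| ∂μ := integral_integral_swap hprod
      _ ≤ ∫ z, |z| * J z := by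
          refine integral_mono_of_nonneg ?_ hJmom ?_
          · filter_upwards with z
            exact integral_nonneg fun x => mul_nonneg (hJ0 z) (abs_nonneg _)
          · filter_upwards with z
            rw [integral_const_mul]
            have := shift_bound u hucont hmono hu0 hu1 z a b hab
            nlinarith [hJ0 z]
  have hKint : ∀ a b : ℝ, a ≤ b → |∫ x in a..b, K x| ≤ ν := by
    intro a b hab
    calc |∫ x in a..b, K x| ≤ ∫ x in a..b, |K x| :=
          intervalIntegral.abs_integral_le_integral_abs hab
      _ = ∫ x in Set.Ioc a b, |K x| := intervalIntegral.integral_of_le hab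
      _ ≤ ν := hνb a b hab
  -- the equation in terms of K
  have hKd : ∀ x, c * deriv u x = K x + f (u x) := by
    intro x
    linarith [heq x, hKeq x]
  have hfu : Continuous (fun x => f (u x)) :=
    hf.continuousOn.comp_continuous hucont (fun x => ⟨hu0 x, hu1 x⟩)
  -- a point where u = ρ
  obtain ⟨a₀, ha₀⟩ := (hlm.eventually_lt_const hρ0).exists
  obtain ⟨b₀, hb₀⟩ := (hlp.eventually_const_lt hρ1).exists
  have hab₀ : a₀ ≤ b₀ := by
    by_contra h
    exact absurd (hmono (le_of_not_ge h)) (by linarith)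
  obtain ⟨x0, _, hx0⟩ := intermediate_value_Icc hab₀ hucont.continuousOn
    ⟨ha₀.le, hb₀.le⟩
  rcases eq_or_ne c 0 with hc0 | hc0
  · simp [hc0]
  -- c ≠ 0 : deriv u is continuous, FTC applies
  have hdc : Continuous (deriv u) := by
    have h : deriv u = fun x => (K x + f (u x)) / c := by
      funext x
      field_simp
      linarith [hKd x]
    rw [h]
    exact (hKcont.add hfu).div_const c
  have hftc : ∀ a b : ℝ, ∫ x in a..b, deriv u x = u b - u a := fun a b =>
    intervalIntegral.integral_deriv_eq_sub (fun x _ => hud x) (hdc.intervalIntegrable a b)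
  rcases hc0.lt_or_gt with hc | hc
  · -- c < 0 : use the right side
    have hfnn : ∀ x, x0 ≤ x → 0 ≤ f (u x) := by
      intro x hx
      have h1 : ρ ≤ u x := hx0 ▸ hmono hx
      rcases eq_or_lt_of_le h1 with h | h
      · exact le_of_eq (hfig (u x) ⟨hu0 x, h.symm.le⟩).symm
      rcases eq_or_lt_of_le (hu1 x) with h2 | h2
      · rw [h2, hf1]
      · exact (hfpos (u x) ⟨h, h2⟩).le
    have hbx : ∀ b, x0 ≤ b → -ν ≤ c * (u b - ρ) := by
      intro b hb
      have hKle : ∫ x in x0..b, K x ≤ ∫ x in x0..b, (K x + f (u x)) :=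
        intervalIntegral.integral_mono_on hb (hKcont.intervalIntegrable _ _)
          ((hKcont.add hfu).intervalIntegrable _ _) (fun x hx => by linarith [hfnn x hx.1])
      have heq2 : ∫ x in x0..b, (K x + f (u x)) = c * (u b - ρ) := by
        rw [intervalIntegral.integral_congr (g := fun x => c * deriv u x)
          (fun x _ => (hKd x).symm), intervalIntegral.integral_const_mul, hftc, hx0]
      have habs := abs_le.1 (hKint x0 b hb)
      linarith [habs.1, hKle, heq2]
    have hlim : Tendsto (fun b => c * (u b - ρ)) atTop (nhds (c * (1 - ρ))) :=
      ((hlp.sub_const ρ).const_mul c)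
    have h1ρ : -ν ≤ c * (1 - ρ) :=
      ge_of_tendsto hlim (eventually_atTop.2 ⟨x0, hbx⟩)
    rw [abs_of_neg hc]
    nlinarith [min_le_right ρ (1 - ρ), sq_nonneg c,
      mul_le_mul_of_nonneg_right (min_le_right ρ (1 - ρ)) (sq_nonneg c),
      mul_le_mul_of_nonneg_left h1ρ (by linarith : (0:ℝ) ≤ -c)]
  · -- c > 0 : use the left side
    have hρx : ∀ a, a ≤ x0 → c * (ρ - u a) ≤ ν := by
      intro a ha
      have hcongr : ∀ x ∈ Set.uIcc a x0, c * deriv u x = K x := by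
        intro x hx
        rw [Set.uIcc_of_le ha] at hx
        have hfz : f (u x) = 0 := hfig (u x) ⟨hu0 x, hx0 ▸ hmono hx.2⟩
        linarith [hKd x]
      have heq2 : c * (ρ - u a) = ∫ x in a..x0, K x := by
        rw [← intervalIntegral.integral_congr hcongr,
          intervalIntegral.integral_const_mul, hftc, hx0]
      have habs := abs_le.1 (hKint a x0 ha)
      linarith [habs.2, heq2]
    have hlim : Tendsto (fun a => c * (ρ - u a)) atBot (nhds (c * (ρ - 0))) :=
      ((tendsto_const_nhds.sub hlm).const_mul c)
    rw [sub_zero] at hlim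
    have hcρ : c * ρ ≤ ν :=
      le_of_tendsto hlim (eventually_atBot.2 ⟨x0, fun a ha => hρx a ha⟩)
    rw [abs_of_pos hc]
    nlinarith [min_le_left ρ (1 - ρ), sq_nonneg c,
      mul_le_mul_of_nonneg_right (min_le_left ρ (1 - ρ)) (sq_nonneg c),
      mul_le_mul_of_nonneg_left hcρ hc.le]
end

section
/- Let J satisfy (j1) and suppose ∫_ℝ J(-x) e^{λ₀ x} dx < ∞ for some λ₀ > 0. Let f be C¹ with f(0)=0, f'(0) > 0. Define m(λ) = ∫_ℝ J(-x) e^{λx} dx + f'(0) - 1 and c¹ = inf_{λ>0} m(λ)/λ. If J is symmetric (J(x) = J(-x)), then c¹ > 0. -/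
open MeasureTheory Real Filter

lemma cosh_lb (s : ℝ) : 2 ≤ Real.exp s + Real.exp (-s) := by
  nlinarith [Real.add_one_le_exp s, Real.add_one_le_exp (-s)]

lemma cosh_lb' (s : ℝ) : 2 * |s| ≤ Real.exp s + Real.exp (-s) := by
  rcases abs_cases s with ⟨h, hs⟩ | ⟨h, hs⟩
  · have he : Real.exp s = Real.exp (s/2) * Real.exp (s/2) := by
      rw [← Real.exp_add]; ring_nf
    have hp : (0:ℝ) ≤ s/2 + 1 := by linarith
    have hq := mul_le_mul (Real.add_one_le_exp (s/2)) (Real.add_one_le_exp (s/2)) hp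
      (Real.exp_pos _).le
    nlinarith [Real.exp_pos (-s), sq_nonneg (s/2 - 1)]
  · have he : Real.exp (-s) = Real.exp (-s/2) * Real.exp (-s/2) := by
      rw [← Real.exp_add]; ring_nf
    have hp : (0:ℝ) ≤ -s/2 + 1 := by linarith
    have hq := mul_le_mul (Real.add_one_le_exp (-s/2)) (Real.add_one_le_exp (-s/2)) hp
      (Real.exp_pos _).le
    nlinarith [Real.exp_pos s, sq_nonneg (-s/2 - 1)]

theorem stmt12 (J f : ℝ → ℝ) (lam₀ : ℝ) (hlam₀ : 0 < lam₀)
    (hJc : Continuous J) (hJ0 : ∀ z, 0 ≤ J z)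
    (hJint : Integrable J) (hJ1 : ∫ z, J z = 1)
    (hJmom : Integrable (fun z => |z| * J z))
    (hJexp : Integrable (fun x => J (-x) * Real.exp (lam₀ * x)))
    (hf : ContDiff ℝ 1 f) (hf0 : f 0 = 0) (hf0' : 0 < deriv f 0)
    (hsymm : ∀ x, J x = J (-x)) :
    0 < sInf {y : ℝ | ∃ lam > 0, Integrable (fun x => J (-x) * Real.exp (lam * x)) ∧
      y = ((∫ x, J (-x) * Real.exp (lam * x)) + deriv f 0 - 1) / lam} := by
  set d := deriv f 0 with hd
  set M := ∫ x, |x| * J x with hM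
  set t := min d 1 with ht
  have ht0 : 0 < t := lt_min hf0' one_pos
  have ht1 : t ≤ 1 := min_le_right _ _
  have htd : t ≤ d := min_le_left _ _
  -- M > 0
  have hM0 : 0 ≤ M := integral_nonneg fun x => mul_nonneg (abs_nonneg x) (hJ0 x)
  have hMpos : 0 < M := by
    rcases hM0.lt_or_eq with h | h
    · exact h
    exfalso
    have hz : (fun x => |x| * J x) =ᵐ[volume] 0 := by
      rw [← MeasureTheory.integral_eq_zero_iff_of_nonneg
        (fun x => mul_nonneg (abs_nonneg x) (hJ0 x)) hJmom]
      exact h.symm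
    have h0 : ∀ᵐ x : ℝ, x ≠ 0 := by
      rw [ae_iff]
      have : {x : ℝ | ¬ x ≠ 0} = {0} := by ext x; simp
      rw [this]
      exact Real.volume_singleton
    have hJz : J =ᵐ[volume] 0 := by
      filter_upwards [hz, h0] with x h1 h2
      have : |x| * J x = 0 := h1
      have hxa : |x| ≠ 0 := fun hc => h2 (abs_eq_zero.mp hc)
      exact (mul_eq_zero.mp this).resolve_left hxa
    have : (∫ z, J z) = 0 := by
      rw [integral_congr_ae hJz]; simp
    rw [hJ1] at this; norm_num at this
  -- key integral lower bound
  have key : ∀ lam : ℝ, 0 < lam → Integrable (fun x => J (-x) * Real.exp (lam * x)) →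
      (1 - t) + t * lam * M ≤ ∫ x, J (-x) * Real.exp (lam * x) := by
    intro lam hlam hint
    set g : ℝ → ℝ := fun x => J (-x) * Real.exp (lam * x) with hg
    have hgneg : Integrable (fun x => g (-x)) := hint.comp_neg
    have hI : ∫ x, g (-x) = ∫ x, g x := integral_neg_eq_self g volume
    have hpt : ∀ x, 2 * ((1 - t) * J x + t * lam * (|x| * J x)) ≤ g x + g (-x) := by
      intro x
      have hJx : J (-x) = J x := (hsymm x).symm
      have hJnx : J (-(-x)) = J x := by rw [neg_neg]
      have hgx : g x + g (-x) = J x * (Real.exp (lam * x) + Real.exp (-(lam * x))) := by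
        simp only [hg, hJx, hJnx, mul_neg]
        ring
      rw [hgx]
      have h1 := cosh_lb (lam * x)
      have h2 := cosh_lb' (lam * x)
      have habs : |lam * x| = lam * |x| := by
        rw [abs_mul, abs_of_pos hlam]
      rw [habs] at h2
      nlinarith [mul_nonneg (mul_nonneg (by linarith : (0:ℝ) ≤ 1 - t) (hJ0 x))
          (by linarith : (0:ℝ) ≤ Real.exp (lam * x) + Real.exp (-(lam * x)) - 2),
        mul_nonneg (mul_nonneg ht0.le (hJ0 x))
          (by linarith : (0:ℝ) ≤ Real.exp (lam * x) + Real.exp (-(lam * x)) - 2 * (lam * |x|))]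
    have hRHSint : Integrable (fun x => 2 * ((1 - t) * J x + t * lam * (|x| * J x))) :=
      ((hJint.const_mul (1 - t)).add (hJmom.const_mul (t * lam))).const_mul 2
    have hLHSint : Integrable (fun x => g x + g (-x)) := hint.add hgneg
    have hmono := integral_mono hRHSint hLHSint hpt
    have hRHS : ∫ x, 2 * ((1 - t) * J x + t * lam * (|x| * J x)) =
        2 * ((1 - t) * 1 + t * lam * M) := by
      rw [integral_const_mul, integral_add (hJint.const_mul (1 - t)) (hJmom.const_mul (t * lam)),
        integral_const_mul, integral_const_mul, hJ1]
    have hLHS : ∫ x, (g x + g (-x)) = 2 * ∫ x, g x := by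
      rw [integral_add hint hgneg, hI]; ring
    rw [hRHS, hLHS] at hmono
    linarith
  -- nonempty
  set S := {y : ℝ | ∃ lam > 0, Integrable (fun x => J (-x) * Real.exp (lam * x)) ∧
      y = ((∫ x, J (-x) * Real.exp (lam * x)) + d - 1) / lam} with hS
  have hne : S.Nonempty :=
    ⟨((∫ x, J (-x) * Real.exp (lam₀ * x)) + d - 1) / lam₀, lam₀, hlam₀, hJexp, rfl⟩
  have hlb : ∀ y ∈ S, t * M ≤ y := by
    rintro y ⟨lam, hlam, hint, rfl⟩
    have hk := key lam hlam hint
    rw [le_div_iff₀ hlam]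
    nlinarith
  calc (0:ℝ) < t * M := mul_pos ht0 hMpos
    _ ≤ sInf S := le_csInf hne hlb
end

section
/- Let J satisfy (j1) with J ∈ C¹ compactly supported, c ∈ ℝ, f'(0) ∈ ℝ. Let u : ℝ → [0,∞) be measurable with u(x) ≤ M e^{αx} for all x (some M, α > 0) and suppose u is integrable against e^{-λx} for 0 < λ < α. Define U(λ) = ∫_ℝ e^{-λx} u(x) dx and m(λ) = ∫_ℝ J(-x) e^{λx} dx + f'(0) - 1. If u is a C¹ solution of J⋆u - u - cu' + f(u) = 0 with u(-∞)=0 and u bounded, then for 0 < Re λ < α: U(λ)(-cλ + m(λ)) = ∫_ℝ e^{-λx}(f'(0)u(x) - f(u(x))) dx. -/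
open MeasureTheory Real Filter

theorem stmt13 (J f u : ℝ → ℝ) (c M α : ℝ) (hM : 0 < M) (hα : 0 < α)
    (hJc : Continuous J) (hJ0 : ∀ z, 0 ≤ J z)
    (hJint : Integrable J) (hJ1 : ∫ z, J z = 1)
    (hJmom : Integrable (fun z => |z| * J z))
    (hJC1 : ContDiff ℝ 1 J) (hJcs : HasCompactSupport J)
    (hf : ContDiff ℝ 1 f) (hf0 : f 0 = 0)
    (hu0 : ∀ x, 0 ≤ u x) (hub : ∃ C, ∀ x, u x ≤ C)
    (huexp : ∀ x, u x ≤ M * Real.exp (α * x))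
    (huint : ∀ lam : ℝ, 0 < lam → lam < α →
      Integrable (fun x => Real.exp (-lam * x) * u x))
    (huC1 : ContDiff ℝ 1 u)
    (heq : ∀ x, (∫ y, J (x - y) * u y) - u x - c * deriv u x + f (u x) = 0)
    (hlim : Tendsto u atBot (nhds 0)) :
    ∀ lam : ℝ, 0 < lam → lam < α →
      (∫ x, Real.exp (-lam * x) * u x) *
          (-(c * lam) + ((∫ x, J (-x) * Real.exp (lam * x)) + deriv f 0 - 1)) =
        ∫ x, Real.exp (-lam * x) * (deriv f 0 * u x - f (u x)) := by
  intro lam hl1 hl2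
  have hucont : Continuous u := huC1.continuous
  have hudiff : Differentiable ℝ u := huC1.differentiable one_ne_zero
  have intU : Integrable (fun x => Real.exp (-lam * x) * u x) := huint lam hl1 hl2
  have hEcont : Continuous fun x : ℝ => Real.exp (-lam * x) :=
    Real.continuous_exp.comp (continuous_const.mul continuous_id)
  set F : ℝ → ℝ := fun z => J z * Real.exp (-lam * z) with hFdef
  have hFcont : Continuous F := hJc.mul (Real.continuous_exp.comp (by continuity))
  have hFcs : HasCompactSupport F := hJcs.mul_right
  have intF : Integrable F := hFcont.integrable_of_hasCompactSupport hFcs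
  -- the m₀ integral equals ∫ F
  have hm0 : (∫ x, J (-x) * Real.exp (lam * x)) = ∫ z, F z := by
    rw [← MeasureTheory.integral_neg_eq_self F]
    congr 1
    funext x
    simp [hFdef, mul_comm, neg_mul, mul_neg, neg_neg]
  -- convolution identity
  have hconv : ∀ x, (MeasureTheory.convolution F (fun y => Real.exp (-lam * y) * u y)
      (ContinuousLinearMap.mul ℝ ℝ) volume) x
      = Real.exp (-lam * x) * ∫ y, J (x - y) * u y := by
    intro x
    rw [MeasureTheory.convolution_def]
    have h1 : ∀ t : ℝ, (ContinuousLinearMap.mul ℝ ℝ) (F t)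
        ((fun y => Real.exp (-lam * y) * u y) (x - t))
        = Real.exp (-lam * x) * (J t * u (x - t)) := by
      intro t
      simp only [ContinuousLinearMap.mul_apply', hFdef]
      have he : Real.exp (-lam * t) * Real.exp (-lam * (x - t)) = Real.exp (-lam * x) := by
        rw [← Real.exp_add]; ring_nf
      calc J t * Real.exp (-lam * t) * (Real.exp (-lam * (x - t)) * u (x - t))
          = (Real.exp (-lam * t) * Real.exp (-lam * (x - t))) * (J t * u (x - t)) := by ring
        _ = Real.exp (-lam * x) * (J t * u (x - t)) := by rw [he]
    simp_rw [h1]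
    rw [MeasureTheory.integral_const_mul]
    congr 1
    calc (∫ t, J t * u (x - t)) = ∫ t, J (x - (x - t)) * u (x - t) := by
          congr 1; funext t; rw [sub_sub_cancel]
      _ = ∫ y, J (x - y) * u y := by
          exact MeasureTheory.integral_sub_left_eq_self (fun y => J (x - y) * u y) volume x
  -- Fubini / convolution integral
  have intConv : Integrable (fun x => Real.exp (-lam * x) * ∫ y, J (x - y) * u y) := by
    have h := intF.integrable_convolution (ContinuousLinearMap.mul ℝ ℝ) intU
    exact h.congr (ae_of_all _ hconv)
  have hintConv : (∫ x, Real.exp (-lam * x) * ∫ y, J (x - y) * u y)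
      = (∫ z, F z) * (∫ x, Real.exp (-lam * x) * u x) := by
    have h := MeasureTheory.integral_convolution (L := ContinuousLinearMap.mul ℝ ℝ)
      (μ := volume) (ν := volume) intF intU
    rw [← integral_congr_ae (ae_of_all _ hconv), h, ContinuousLinearMap.mul_apply']
  -- Lipschitz bound for f near 0
  obtain ⟨C, hC⟩ := hub
  have hC0 : (0:ℝ) ≤ C := le_trans (hu0 0) (hC 0)
  obtain ⟨K, hK⟩ := (isCompact_Icc (a := (0:ℝ)) (b := C)).exists_bound_of_continuousOn
    ((hf.continuous_deriv le_rfl).continuousOn)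
  have hfu : ∀ x, |f (u x)| ≤ max K 0 * u x := by
    intro x
    have h1 := Convex.norm_image_sub_le_of_norm_deriv_le (s := Set.Icc (0:ℝ) C) (C := max K (0:ℝ))
      (fun y _ => (hf.differentiable one_ne_zero).differentiableAt)
      (fun y hy => le_trans (hK y hy) (le_max_left K (0:ℝ)))
      (convex_Icc (0:ℝ) C) (Set.mem_Icc.mpr ⟨le_refl (0:ℝ), hC0⟩)
      (Set.mem_Icc.mpr ⟨hu0 x, hC x⟩)
    simpa [hf0, Real.norm_eq_abs, abs_of_nonneg (hu0 x)] using h1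
  have int_fu : Integrable (fun x => Real.exp (-lam * x) * f (u x)) := by
    refine (intU.const_mul (max K 0)).mono ?_ (ae_of_all _ fun x => ?_)
    · exact (hEcont.mul (hf.continuous.comp hucont)).aestronglyMeasurable
    · have hE : (0:ℝ) < Real.exp (-lam * x) := Real.exp_pos _
      have h2 := hfu x
      have hK0 : (0:ℝ) ≤ max K 0 := le_max_right _ _
      rw [Real.norm_eq_abs, Real.norm_eq_abs, abs_mul, abs_mul, abs_mul,
        abs_of_pos hE, abs_of_nonneg hK0, abs_of_nonneg (hu0 x)]
      nlinarith [mul_le_mul_of_nonneg_left h2 hE.le]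
  -- the c * u' term
  have hcu' : Integrable (fun x => c * (Real.exp (-lam * x) * deriv u x)) ∧
      (∫ x, c * (Real.exp (-lam * x) * deriv u x))
        = c * (lam * ∫ x, Real.exp (-lam * x) * u x) := by
    rcases eq_or_ne c 0 with hc | hc
    · constructor
      · simp [hc]
      · simp [hc]
    · have heq' : ∀ x, Real.exp (-lam * x) * deriv u x
          = c⁻¹ * ((Real.exp (-lam * x) * ∫ y, J (x - y) * u y)
            - Real.exp (-lam * x) * u x + Real.exp (-lam * x) * f (u x)) := by
        intro x
        have h := heq x
        rw [inv_mul_eq_div, eq_div_iff hc]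
        linear_combination (-(Real.exp (-lam * x))) * h
      have intEu' : Integrable (fun x => Real.exp (-lam * x) * deriv u x) := by
        have h := (((intConv.sub intU).add int_fu).const_mul c⁻¹)
        exact h.congr (ae_of_all _ fun x => (heq' x).symm)
      -- integration by parts
      have hgd : ∀ x, HasDerivAt (fun x => Real.exp (-lam * x) * u x)
          (Real.exp (-lam * x) * deriv u x - lam * (Real.exp (-lam * x) * u x)) x := by
        intro x
        have h1 : HasDerivAt (fun x : ℝ => Real.exp (-lam * x))
            (Real.exp (-lam * x) * (-lam * 1)) x :=
          ((hasDerivAt_id x).const_mul (-lam)).exp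
        have h2 := (hudiff x).hasDerivAt
        have h3 := h1.mul h2
        exact h3.congr_deriv (by ring)
      have hgint : Integrable (fun x => Real.exp (-lam * x) * deriv u x
          - lam * (Real.exp (-lam * x) * u x)) := intEu'.sub (intU.const_mul lam)
      have htop : Tendsto (fun x => Real.exp (-lam * x) * u x) atTop (nhds 0) := by
        have hg : Tendsto (fun x : ℝ => C * Real.exp (-lam * x)) atTop (nhds 0) := by
          have h0 : Tendsto (fun x : ℝ => -lam * x) atTop atBot := by
            have h1 := (tendsto_id (α := ℝ)).const_mul_atTop hl1
            simpa [neg_mul] using tendsto_neg_atBot_iff.mpr h1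
          simpa using (Real.tendsto_exp_comp_nhds_zero.mpr h0).const_mul C
        refine squeeze_zero (fun x => mul_nonneg (Real.exp_pos _).le (hu0 x))
          (fun x => ?_) hg
        rw [mul_comm]
        exact mul_le_mul_of_nonneg_right (hC x) (Real.exp_pos _).le
      have hbot : Tendsto (fun x => Real.exp (-lam * x) * u x) atBot (nhds 0) := by
        have hg : Tendsto (fun x : ℝ => M * Real.exp ((α - lam) * x)) atBot (nhds 0) := by
          have h0 : Tendsto (fun x : ℝ => (α - lam) * x) atBot atBot := by
            exact (tendsto_id (α := ℝ)).const_mul_atBot (by linarith)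
          simpa using (Real.tendsto_exp_comp_nhds_zero.mpr h0).const_mul M
        refine squeeze_zero (fun x => mul_nonneg (Real.exp_pos _).le (hu0 x))
          (fun x => ?_) hg
        have h1 : Real.exp (-lam * x) * u x ≤ Real.exp (-lam * x) * (M * Real.exp (α * x)) :=
          mul_le_mul_of_nonneg_left (huexp x) (Real.exp_pos _).le
        calc Real.exp (-lam * x) * u x ≤ Real.exp (-lam * x) * (M * Real.exp (α * x)) := h1
          _ = M * Real.exp ((α - lam) * x) := by
              rw [mul_left_comm, ← Real.exp_add]; ring_nf
      have hIic := MeasureTheory.integral_Iic_of_hasDerivAt_of_tendsto (a := (0:ℝ))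
        (f := fun x => Real.exp (-lam * x) * u x)
        (((hEcont.mul hucont)).continuousWithinAt)
        (fun x _ => hgd x) hgint.integrableOn hbot
      have hIoi := MeasureTheory.integral_Ioi_of_hasDerivAt_of_tendsto (a := (0:ℝ))
        (f := fun x => Real.exp (-lam * x) * u x)
        (((hEcont.mul hucont)).continuousWithinAt)
        (fun x _ => hgd x) hgint.integrableOn htop
      have hzero : (∫ x, (Real.exp (-lam * x) * deriv u x
          - lam * (Real.exp (-lam * x) * u x))) = 0 := by
        rw [← intervalIntegral.integral_Iic_add_Ioi (b := (0:ℝ)) hgint.integrableOn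
          hgint.integrableOn, hIic, hIoi]
        ring
      have hsub := MeasureTheory.integral_sub intEu' (intU.const_mul lam)
      rw [hsub] at hzero
      rw [MeasureTheory.integral_const_mul] at hzero
      constructor
      · exact intEu'.const_mul c
      · rw [MeasureTheory.integral_const_mul]
        have : (∫ x, Real.exp (-lam * x) * deriv u x)
            = lam * ∫ x, Real.exp (-lam * x) * u x := by linarith
        rw [this]
  -- assemble
  have hpoint : ∀ x, Real.exp (-lam * x) * (deriv f 0 * u x - f (u x))
      = deriv f 0 * (Real.exp (-lam * x) * u x)
        + ((Real.exp (-lam * x) * ∫ y, J (x - y) * u y)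
          - Real.exp (-lam * x) * u x - c * (Real.exp (-lam * x) * deriv u x)) := by
    intro x
    linear_combination (-(Real.exp (-lam * x))) * heq x
  have i0 : Integrable (fun x => deriv f 0 * (Real.exp (-lam * x) * u x)) :=
    intU.const_mul _
  have i1 : Integrable (fun x => (Real.exp (-lam * x) * ∫ y, J (x - y) * u y)
      - Real.exp (-lam * x) * u x) := intConv.sub intU
  have i2 : Integrable (fun x => ((Real.exp (-lam * x) * ∫ y, J (x - y) * u y)
      - Real.exp (-lam * x) * u x) - c * (Real.exp (-lam * x) * deriv u x)) := i1.sub hcu'.1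
  rw [integral_congr_ae (ae_of_all _ hpoint),
    MeasureTheory.integral_add i0 i2,
    MeasureTheory.integral_sub i1 hcu'.1,
    MeasureTheory.integral_sub intConv intU,
    MeasureTheory.integral_const_mul, hintConv, hcu'.2, hm0]
  ring
end

section
/- Let J satisfy (j1), (MP) (∃ a<0<b with J(a),J(b)>0), and let f be C¹ with f(0)=f(1)=0, f ≥ 0 on (0,1), f(γ)>0 for all γ ∈ (0,1). Suppose u : ℝ → [0,1] is continuous, solves J⋆u - u - cu' + f(u) = 0 (c ∈ ℝ; if c ≠ 0 assume u ∈ C¹), and lim_{x→+∞} u(x) = lim_{x→-∞} u(x) = 1. Then u ≡ 1. -/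
open MeasureTheory Real Filter

theorem stmt15 (J f u : ℝ → ℝ) (c : ℝ)
    (hJc : Continuous J) (hJ0 : ∀ z, 0 ≤ J z)
    (hJint : Integrable J) (hJ1 : ∫ z, J z = 1)
    (hJmom : Integrable (fun z => |z| * J z))
    (hMP : ∃ a b : ℝ, a < 0 ∧ 0 < b ∧ 0 < J a ∧ 0 < J b)
    (hf : ContDiff ℝ 1 f) (hf0 : f 0 = 0) (hf1 : f 1 = 0)
    (hfnn : ∀ s ∈ Set.Ioo (0:ℝ) 1, 0 ≤ f s)
    (hfpos : ∀ γ ∈ Set.Ioo (0:ℝ) 1, 0 < f γ)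
    (hucont : Continuous u) (hurange : ∀ x, u x ∈ Set.Icc (0:ℝ) 1)
    (huC1 : c ≠ 0 → ContDiff ℝ 1 u)
    (heq : ∀ x, (∫ y, J (x - y) * u y) - u x - c * deriv u x + f (u x) = 0)
    (hlm : Tendsto u atBot (nhds 1)) (hlp : Tendsto u atTop (nhds 1)) :
    ∀ x, u x = 1 := by
  obtain ⟨a, b, ha, hb, hJa, hJb⟩ := hMP
  -- basic integrability facts
  have hint : ∀ x : ℝ, Integrable (fun y => J (x - y) * u y) := by
    intro x
    have h1 : Integrable (fun y => J (x - y)) := hJint.comp_sub_left x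
    have h2 : Integrable (fun y => u y * J (x - y)) :=
      h1.bdd_mul (c := 1) hucont.aestronglyMeasurable
        (Filter.Eventually.of_forall fun y => by
          have := hurange y
          rw [Real.norm_eq_abs, abs_le]
          constructor <;> linarith [this.1, this.2])
    simpa [mul_comm] using h2
  have hJtrans : ∀ x : ℝ, (∫ y, J (x - y)) = 1 := by
    intro x
    rw [integral_sub_left_eq_self J volume x]
    exact hJ1
  -- at a global minimum point, c * deriv u x₀ = 0
  have hderiv : ∀ x₀ : ℝ, (∀ x, u x₀ ≤ u x) → c * deriv u x₀ = 0 := by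
    intro x₀ hmin
    rcases eq_or_ne c 0 with hc | hc
    · simp [hc]
    · have hloc : IsLocalMin u x₀ := by
        apply IsMinOn.isLocalMin (s := Set.univ)
        · intro y _; exact hmin y
        · exact Filter.univ_mem
      rw [hloc.deriv_eq_zero]; ring
  -- key inequality: at a global minimum, f (u x₀) ≤ 0
  have hkey : ∀ x₀ : ℝ, (∀ x, u x₀ ≤ u x) → f (u x₀) ≤ 0 := by
    intro x₀ hmin
    have hconv : u x₀ ≤ ∫ y, J (x₀ - y) * u y := by
      have h1 : (∫ y, J (x₀ - y) * u x₀) = u x₀ := by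
        rw [integral_mul_const, hJtrans x₀, one_mul]
      rw [← h1]
      apply integral_mono ((hJint.comp_sub_left x₀).mul_const _) (hint x₀)
      intro y
      exact mul_le_mul_of_nonneg_left (hmin y) (hJ0 _)
    have := heq x₀
    rw [hderiv x₀ hmin] at this
    linarith
  -- zero propagation: if u x₀ = 0 then u (x₀ - a) = 0
  have hprop : ∀ x₀ : ℝ, u x₀ = 0 → u (x₀ - a) = 0 := by
    intro x₀ hz
    have hmin : ∀ x, u x₀ ≤ u x := by
      intro x; rw [hz]; exact (hurange x).1
    have := heq x₀
    rw [hderiv x₀ hmin, hz, hf0] at this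
    have hint0 : (∫ y, J (x₀ - y) * u y) = 0 := by linarith
    have hnn : 0 ≤ fun y => J (x₀ - y) * u y := by
      intro y; exact mul_nonneg (hJ0 _) (hurange y).1
    have hae : (fun y => J (x₀ - y) * u y) =ᵐ[volume] 0 :=
      (integral_eq_zero_iff_of_nonneg hnn (hint x₀)).mp hint0
    have hcont : Continuous fun y => J (x₀ - y) * u y :=
      (hJc.comp (continuous_const.sub continuous_id)).mul hucont
    have hzero : (fun y => J (x₀ - y) * u y) = 0 :=
      (hcont.ae_eq_iff_eq volume continuous_const).mp hae
    have h := congrFun hzero (x₀ - a)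
    simp only [sub_sub_cancel, Pi.zero_apply] at h
    rcases mul_eq_zero.mp h with h' | h'
    · exact absurd h' (ne_of_gt hJa)
    · exact h'
  -- main argument: suppose u x* < 1 for some x*
  intro x
  by_contra hne
  have hx : u x < 1 := lt_of_le_of_ne (hurange x).2 hne
  -- find a global minimum point
  have hev_top : ∀ᶠ y in atTop, u x < u y := hlp.eventually (eventually_gt_nhds hx)
  have hev_bot : ∀ᶠ y in atBot, u x < u y := hlm.eventually (eventually_gt_nhds hx)
  obtain ⟨M, hM⟩ := hev_top.exists_forall_of_atTop
  obtain ⟨M', hM'⟩ := hev_bot.exists_forall_of_atBot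
  set lo := min M' x with hlo
  set hi := max M x with hhi
  have hle : lo ≤ hi := le_trans (min_le_right _ _) (le_max_right _ _)
  have hxK : x ∈ Set.Icc lo hi := ⟨min_le_right _ _, le_max_right _ _⟩
  obtain ⟨x₀, hx₀K, hx₀min⟩ :=
    (isCompact_Icc (a := lo) (b := hi)).exists_isMinOn ⟨x, hxK⟩ hucont.continuousOn
  have hglobal : ∀ y, u x₀ ≤ u y := by
    intro y
    by_cases hy : y ∈ Set.Icc lo hi
    · exact hx₀min hy
    · have hx₀x : u x₀ ≤ u x := hx₀min hxK
      simp only [Set.mem_Icc, not_and_or, not_le] at hy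
      rcases hy with hy | hy
      · have : M' ≥ y := by rw [hlo] at hy; exact le_of_lt (lt_of_lt_of_le hy (min_le_left _ _))
        linarith [hM' y this]
      · have : M ≤ y := by rw [hhi] at hy; exact le_of_lt (lt_of_le_of_lt (le_max_left _ _) hy)
        linarith [hM y this]
  -- u x₀ must be 0
  have hx₀lt1 : u x₀ < 1 := lt_of_le_of_lt (hglobal x) hx
  have hx₀0 : u x₀ = 0 := by
    by_contra h0
    have hpos : 0 < u x₀ := lt_of_le_of_ne (hurange x₀).1 (Ne.symm h0)
    exact absurd (hfpos (u x₀) ⟨hpos, hx₀lt1⟩) (not_lt.mpr (hkey x₀ hglobal))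
  -- propagate zeros to +∞
  have hiter : ∀ n : ℕ, u (x₀ - n * a) = 0 := by
    intro n
    induction n with
    | zero => simpa using hx₀0
    | succ n ih =>
      have := hprop (x₀ - n * a) ih
      have harg : x₀ - n * a - a = x₀ - (n + 1 : ℕ) * a := by push_cast; ring
      rwa [harg] at this
  -- but u → 1 at atTop
  have hev : ∀ᶠ y in atTop, (1:ℝ)/2 < u y := hlp.eventually (eventually_gt_nhds (by norm_num))
  obtain ⟨N, hN⟩ := hev.exists_forall_of_atTop
  obtain ⟨n, hn⟩ := exists_nat_gt ((N - x₀) / (-a))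
  have hna : N ≤ x₀ - n * a := by
    have hna' : (N - x₀) / (-a) < n := hn
    have : N - x₀ < n * (-a) := (div_lt_iff₀ (by linarith)).mp hna'
    linarith
  have := hN _ hna
  rw [hiter n] at this
  linarith
end

section
/- Let J satisfy (j1), let f be C¹ with f(0) = f(1) = 0, and suppose u : ℝ → [0,1] is a monotone bounded solution (in the distributional sense if c = 0) of εu'' + J⋆u - u - cu' + f(u) = 0 on ℝ for some ε ≥ 0, c ∈ ℝ. Then the limits l⁻ = lim_{x→-∞} u(x) and l⁺ = lim_{x→+∞} u(x) exist and satisfy f(l⁻) = f(l⁺) = 0. -/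
open MeasureTheory Real Filter

private lemma avg_tendsto' {g : ℝ → ℝ} (hg : Continuous g) {L : ℝ} {l : Filter ℝ}
    (hIcc : ∀ s ∈ l, ∀ᶠ x in l, Set.Icc x (x+1) ⊆ s)
    (hgl : Tendsto g l (nhds L)) :
    Tendsto (fun x => ∫ t in x..x+1, g t) l (nhds L) := by
  rw [Metric.tendsto_nhds]
  intro e he
  have hs : {t | dist (g t) L < e/2} ∈ l := hgl (Metric.ball_mem_nhds L (by linarith))
  filter_upwards [hIcc _ hs] with x hx
  have hint : IntervalIntegrable g volume x (x+1) := hg.intervalIntegrable _ _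
  have h1 : (∫ t in x..x+1, g t) - L = ∫ t in x..x+1, (g t - L) := by
    rw [intervalIntegral.integral_sub hint intervalIntegrable_const]
    simp
  rw [Real.dist_eq, h1]
  have h2 : ‖∫ t in x..x+1, (g t - L)‖ ≤ (e/2) * |(x+1) - x| := by
    apply intervalIntegral.norm_integral_le_of_norm_le_const
    intro t ht
    rw [Set.uIoc_of_le (by linarith : x ≤ x+1)] at ht
    have : t ∈ Set.Icc x (x+1) := ⟨le_of_lt ht.1, ht.2⟩
    have := hx this
    simp only [Set.mem_setOf_eq, Real.dist_eq] at this
    rw [Real.norm_eq_abs]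
    exact le_of_lt this
  rw [Real.norm_eq_abs] at h2
  calc |∫ t in x..x+1, (g t - L)| ≤ (e/2) * |(x+1) - x| := h2
    _ = e/2 := by simp
    _ < e := by linarith

private lemma key_lemma (J f u : ℝ → ℝ) (ε c : ℝ)
    (hJc : Continuous J) (hJ0 : ∀ z, 0 ≤ J z)
    (hJint : Integrable J) (hJ1 : ∫ z, J z = 1)
    (hf : ContDiff ℝ 1 f)
    (hurange : ∀ x, u x ∈ Set.Icc (0:ℝ) 1)
    (hu2 : ContDiff ℝ 2 u)
    (heq : ∀ x, ε * deriv (deriv u) x + (∫ y, J (x - y) * u y) - u x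
      - c * deriv u x + f (u x) = 0)
    (l : Filter ℝ) [l.NeBot] [l.IsCountablyGenerated]
    (hIcc : ∀ s ∈ l, ∀ᶠ x in l, Set.Icc x (x+1) ⊆ s)
    (hshift : ∀ a : ℝ, Tendsto (fun x => x + a) l l)
    (L : ℝ) (hL : Tendsto u l (nhds L)) : f L = 0 := by
  -- regularity facts
  have hucont : Continuous u := hu2.continuous
  have hudiff : Differentiable ℝ u := hu2.differentiable (by norm_num)
  have hu' : ContDiff ℝ 1 (deriv u) := by
    have h21 : (2 : WithTop ℕ∞) = 1 + 1 := by norm_num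
    exact (contDiff_succ_iff_deriv.mp (h21 ▸ hu2)).2.2
  have hu'cont : Continuous (deriv u) := hu'.continuous
  have hu'diff : Differentiable ℝ (deriv u) := hu'.differentiable (by norm_num)
  have hu''cont : Continuous (deriv (deriv u)) := hu'.continuous_deriv le_rfl
  -- convolution rewrite
  have hconv : ∀ x, (∫ y, J (x - y) * u y) = ∫ z, J z * u (x - z) := by
    intro x
    calc (∫ y, J (x - y) * u y) = ∫ y, (fun z => J z * u (x - z)) (x - y) := by
          congr 1; funext y; simp
      _ = ∫ z, J z * u (x - z) := integral_sub_left_eq_self (fun z => J z * u (x - z)) volume x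
  -- limit of the convolution
  have hK : Tendsto (fun x => ∫ z, J z * u (x - z)) l (nhds L) := by
    have h := MeasureTheory.tendsto_integral_filter_of_dominated_convergence
      (μ := volume) (l := l) (F := fun x z => J z * u (x - z)) (f := fun z => J z * L)
      (bound := J) ?_ ?_ hJint ?_
    · have : (∫ z, J z * L) = L := by
        rw [MeasureTheory.integral_mul_const, hJ1, one_mul]
      rwa [this] at h
    · filter_upwards with x
      exact (hJc.mul (hucont.comp (continuous_const.sub continuous_id))).aestronglyMeasurable
    · filter_upwards with x
      filter_upwards with z
      have h1 := (hurange (x - z)).1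
      have h2 := (hurange (x - z)).2
      rw [Real.norm_eq_abs, abs_mul, abs_of_nonneg (hJ0 z), abs_of_nonneg h1]
      nlinarith [hJ0 z]
    · filter_upwards with z
      have hxz : Tendsto (fun x => u (x - z)) l (nhds L) := by
        refine hL.comp ?_
        simpa [sub_eq_add_neg] using hshift (-z)
      exact hxz.const_mul (J z)
  -- the function h = ε u'' - c u'
  set h : ℝ → ℝ := fun x => ε * deriv (deriv u) x - c * deriv u x with hh_def
  have hhcont : Continuous h := (continuous_const.mul hu''cont).sub (continuous_const.mul hu'cont)
  have hh : ∀ x, h x = u x - f (u x) - (∫ z, J z * u (x - z)) := by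
    intro x
    have h0 := heq x
    rw [hconv x] at h0
    simp only [hh_def]
    linarith
  have hhl : Tendsto h l (nhds (-(f L))) := by
    have hfu : Tendsto (fun x => f (u x)) l (nhds (f L)) :=
      (hf.continuous.tendsto L).comp hL
    have : Tendsto (fun x => u x - f (u x) - (∫ z, J z * u (x - z))) l
        (nhds (L - f L - L)) := (hL.sub hfu).sub hK
    have heqL : L - f L - L = -(f L) := by ring
    rw [heqL] at this
    exact this.congr (fun x => (hh x).symm)
  -- first average A
  set A : ℝ → ℝ := fun x => ε * (deriv u (x+1) - deriv u x) - c * (u (x+1) - u x) with hA_def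
  have hAcont : Continuous A := by
    apply Continuous.sub
    · exact continuous_const.mul ((hu'cont.comp (continuous_id.add continuous_const)).sub hu'cont)
    · exact continuous_const.mul ((hucont.comp (continuous_id.add continuous_const)).sub hucont)
  have hu''int : ∀ a b : ℝ, IntervalIntegrable (deriv (deriv u)) volume a b :=
    fun a b => hu''cont.intervalIntegrable a b
  have hu'int : ∀ a b : ℝ, IntervalIntegrable (deriv u) volume a b :=
    fun a b => hu'cont.intervalIntegrable a b
  have hA : ∀ x, (∫ t in x..x+1, h t) = A x := by
    intro x
    simp only [hh_def, hA_def]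
    rw [intervalIntegral.integral_sub ((hu''int x (x+1)).const_mul ε)
        ((hu'int x (x+1)).const_mul c),
      intervalIntegral.integral_const_mul, intervalIntegral.integral_const_mul,
      intervalIntegral.integral_deriv_eq_sub (fun t _ => hu'diff t) (hu''int x (x+1)),
      intervalIntegral.integral_deriv_eq_sub (fun t _ => hudiff t) (hu'int x (x+1))]
  have hAl : Tendsto A l (nhds (-(f L))) :=
    (avg_tendsto' hhcont hIcc hhl).congr hA
  -- second average
  set I : ℝ → ℝ := fun x => ∫ s in x..x+1, u s with hI_def
  set D : ℝ → ℝ := fun x => u (x+1) - u x with hD_def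
  have huint : ∀ a b : ℝ, IntervalIntegrable u volume a b :=
    fun a b => hucont.intervalIntegrable a b
  have hu1int : ∀ a b : ℝ, IntervalIntegrable (fun s => u (s+1)) volume a b :=
    fun a b => (hucont.comp (continuous_id.add continuous_const)).intervalIntegrable a b
  have hu'1int : ∀ a b : ℝ, IntervalIntegrable (fun s => deriv u (s+1)) volume a b :=
    fun a b => (hu'cont.comp (continuous_id.add continuous_const)).intervalIntegrable a b
  have hB : ∀ x, (∫ s in x..x+1, A s) = ε * (D (x+1) - D x) - c * (I (x+1) - I x) := by
    intro x
    simp only [hA_def, hI_def, hD_def]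
    rw [intervalIntegral.integral_sub
        (((hu'1int x (x+1)).sub (hu'int x (x+1))).const_mul ε)
        (((hu1int x (x+1)).sub (huint x (x+1))).const_mul c),
      intervalIntegral.integral_const_mul, intervalIntegral.integral_const_mul,
      intervalIntegral.integral_sub (hu'1int x (x+1)) (hu'int x (x+1)),
      intervalIntegral.integral_sub (hu1int x (x+1)) (huint x (x+1)),
      intervalIntegral.integral_comp_add_right (fun t => deriv u t) 1,
      intervalIntegral.integral_comp_add_right u 1,
      intervalIntegral.integral_deriv_eq_sub (fun t _ => hudiff t) (hu'int (x+1) (x+1+1)),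
      intervalIntegral.integral_deriv_eq_sub (fun t _ => hudiff t) (hu'int x (x+1))]
  have hD0 : Tendsto D l (nhds 0) := by
    have : Tendsto D l (nhds (L - L)) := ((hL.comp (hshift 1)).sub hL)
    simpa using this
  have hIL : Tendsto I l (nhds L) := avg_tendsto' hucont hIcc hL
  have hBl : Tendsto (fun x => ∫ s in x..x+1, A s) l (nhds 0) := by
    have : Tendsto (fun x => ε * (D (x+1) - D x) - c * (I (x+1) - I x)) l
        (nhds (ε * (0 - 0) - c * (L - L))) := by
      exact (((hD0.comp (hshift 1)).sub hD0).const_mul ε).sub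
        (((hIL.comp (hshift 1)).sub hIL).const_mul c)
    have h0 : ε * ((0:ℝ) - 0) - c * (L - L) = 0 := by ring
    rw [h0] at this
    exact this.congr (fun x => (hB x).symm)
  have hBl' : Tendsto (fun x => ∫ s in x..x+1, A s) l (nhds (-(f L))) :=
    avg_tendsto' hAcont hIcc hAl
  have := tendsto_nhds_unique hBl' hBl
  linarith

theorem stmt16 (J f u : ℝ → ℝ) (ε c : ℝ) (hε : 0 ≤ ε)
    (hJc : Continuous J) (hJ0 : ∀ z, 0 ≤ J z)
    (hJint : Integrable J) (hJ1 : ∫ z, J z = 1)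
    (hJmom : Integrable (fun z => |z| * J z))
    (hf : ContDiff ℝ 1 f) (hf0 : f 0 = 0) (hf1 : f 1 = 0)
    (hmono : Monotone u) (hurange : ∀ x, u x ∈ Set.Icc (0:ℝ) 1)
    (hu2 : ContDiff ℝ 2 u)
    (heq : ∀ x, ε * deriv (deriv u) x + (∫ y, J (x - y) * u y) - u x
      - c * deriv u x + f (u x) = 0) :
    ∃ lm lp : ℝ, Tendsto u atBot (nhds lm) ∧ Tendsto u atTop (nhds lp) ∧
      f lm = 0 ∧ f lp = 0 := by
  have hbdd : BddAbove (Set.range u) := ⟨1, by rintro _ ⟨x, rfl⟩; exact (hurange x).2⟩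
  have hbdd' : BddBelow (Set.range u) := ⟨0, by rintro _ ⟨x, rfl⟩; exact (hurange x).1⟩
  have hp : Tendsto u atTop (nhds (⨆ x, u x)) := tendsto_atTop_ciSup hmono hbdd
  have hm : Tendsto u atBot (nhds (⨅ x, u x)) := tendsto_atBot_ciInf hmono hbdd'
  have hIccTop : ∀ s ∈ (atTop : Filter ℝ), ∀ᶠ x in atTop, Set.Icc x (x+1) ⊆ s := by
    intro s hs
    obtain ⟨N, hN⟩ := mem_atTop_sets.mp hs
    filter_upwards [eventually_ge_atTop N] with x hx t ht
    exact hN t (le_trans hx ht.1)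
  have hIccBot : ∀ s ∈ (atBot : Filter ℝ), ∀ᶠ x in atBot, Set.Icc x (x+1) ⊆ s := by
    intro s hs
    obtain ⟨N, hN⟩ := mem_atBot_sets.mp hs
    filter_upwards [eventually_le_atBot (N-1)] with x hx t ht
    exact hN t (by linarith [ht.2])
  have hshiftTop : ∀ a : ℝ, Tendsto (fun x => x + a) atTop atTop :=
    fun a => tendsto_atTop_add_const_right atTop a tendsto_id
  have hshiftBot : ∀ a : ℝ, Tendsto (fun x => x + a) atBot atBot :=
    fun a => tendsto_atBot_add_const_right atBot a tendsto_id
  refine ⟨⨅ x, u x, ⨆ x, u x, hm, hp, ?_, ?_⟩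
  · exact key_lemma J f u ε c hJc hJ0 hJint hJ1 hf hurange hu2 heq atBot hIccBot hshiftBot _ hm
  · exact key_lemma J f u ε c hJc hJ0 hJint hJ1 hf hurange hu2 heq atTop hIccTop hshiftTop _ hp
end
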